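/- arXiv:0708.1919 — 3 statements merged into one kernel-verified Lean document; each statement's English description precedes it below -/
import Mathlib

section
/- Let κ : [0,1]² → [0,∞) be a kernel and C ≥ 0 a constant. Then s(F,κ) ≤ C^{e(F)} for every finite simple graph F if and only if κ(x,y) ≤ C for almost every (x,y) ∈ [0,1]², where e(F) is the number of edges of F. -/
open MeasureTheory Set Filter
open scoped ENNReal Classical

noncomputable section

/-- The (0-based) index of the subinterval `((i)/n, (i+1)/n]` of `[0,1]` containing `x`. -/
def idx (n : ℕ) (x : ℝ) : ℕ := ⌈x * n⌉₊ - 1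

/-- The subset of `[0,1]` corresponding to a set of vertices of a graph on `Fin n`:
the union of the intervals `(i/n, (i+1)/n]` for `i ∈ X` (vertices `0`-indexed). -/
def vtxSet (n : ℕ) (X : Finset (Fin n)) : Set ℝ :=
  ⋃ i ∈ X, Ioc ((i : ℝ) / n) (((i : ℝ) + 1) / n)

/-- The kernel associated to a graph `G` on `{1,…,n}` and normalizing constant `p`:
it takes the value `1/p` on `((i−1)/n, i/n] × ((j−1)/n, j/n]` whenever `ij ∈ E(G)`,
and `0` elsewhere. -/
def graphKernel {n : ℕ} (p : ℝ) (G : SimpleGraph (Fin n)) : ℝ → ℝ → ℝ := fun x y =>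
  if h : x ∈ Ioc (0:ℝ) 1 ∧ y ∈ Ioc (0:ℝ) 1 ∧ idx n x < n ∧ idx n y < n then
    (if G.Adj ⟨idx n x, h.2.2.1⟩ ⟨idx n y, h.2.2.2⟩ then 1 / p else 0)
  else 0

/-- The cut norm of `W : [0,1]² → ℝ`. -/
def cutNorm (W : ℝ → ℝ → ℝ) : ℝ :=
  sSup {r | ∃ S T : Set ℝ, MeasurableSet S ∧ MeasurableSet T ∧
    S ⊆ Icc 0 1 ∧ T ⊆ Icc 0 1 ∧ r = |∫ q in S ×ˢ T, W q.1 q.2|}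

/-- `τ` is a Lebesgue-measure-preserving bijection of `[0,1]`. -/
def MPBij (τ : ℝ → ℝ) : Prop :=
  MeasurePreserving τ (volume.restrict (Icc 0 1)) (volume.restrict (Icc 0 1)) ∧
    BijOn τ (Icc 0 1) (Icc 0 1)

/-- The cut distance between two kernels. -/
def cutDist (κ₁ κ₂ : ℝ → ℝ → ℝ) : ℝ :=
  sInf {r | ∃ τ : ℝ → ℝ, MPBij τ ∧ r = cutNorm (fun x y => κ₁ x y - κ₂ (τ x) (τ y))}

/-- The number of homomorphisms from `F` to `G`. -/
def homCount {α β : Type*} (F : SimpleGraph α) (G : SimpleGraph β) : ℕ :=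
  Nat.card (F →g G)

/-- The number of injective homomorphisms (embeddings) from `F` to `G`. -/
def embCount {α β : Type*} (F : SimpleGraph α) (G : SimpleGraph β) : ℕ :=
  Nat.card {φ : F →g G // Function.Injective φ}

/-- The number of edges of a graph. -/
def edgeCount {α : Type*} (F : SimpleGraph α) : ℕ := Nat.card F.edgeSet

/-- The normalized homomorphism count `t_p(F,G)`. -/
def tDen {α β : Type*} [Fintype α] [Fintype β] (p : ℝ) (F : SimpleGraph α)
    (G : SimpleGraph β) : ℝ :=
  homCount F G / (p ^ edgeCount F * (Fintype.card β : ℝ) ^ Fintype.card α)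

/-- The normalized embedding count `s_p(F,G)`. -/
def sDen {α β : Type*} [Fintype α] [Fintype β] (p : ℝ) (F : SimpleGraph α)
    (G : SimpleGraph β) : ℝ :=
  embCount F G / (p ^ edgeCount F * ((Fintype.card β).descFactorial (Fintype.card α) : ℝ))

/-- The homomorphism density `s(F,κ)` of a finite graph in a kernel. -/
def homDensity {α : Type*} [Fintype α] (F : SimpleGraph α) (κ : ℝ → ℝ → ℝ) : ℝ :=
  ∫ x in Set.univ.pi (fun _ : α => Icc (0:ℝ) 1),
    ∏ e ∈ F.edgeFinset,
      Sym2.lift ⟨fun i j => (κ (x i) (x j) + κ (x j) (x i)) / 2,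
        fun i j => by dsimp only; rw [add_comm (κ (x i) (x j)) (κ (x j) (x i))]⟩ e

/-- The homomorphism density as a lower integral (for possibly unbounded kernels). -/
def homDensityL {α : Type*} [Fintype α] (F : SimpleGraph α) (κ : ℝ → ℝ → ℝ) : ℝ≥0∞ :=
  ∫⁻ x in Set.univ.pi (fun _ : α => Icc (0:ℝ) 1),
    ∏ e ∈ F.edgeFinset,
      Sym2.lift ⟨fun i j => ENNReal.ofReal ((κ (x i) (x j) + κ (x j) (x i)) / 2),
        fun i j => by dsimp only; rw [add_comm (κ (x i) (x j)) (κ (x j) (x i))]⟩ e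

/-- A kernel: a symmetric measurable function `[0,1]² → [0,∞)`. -/
def IsKernel (κ : ℝ → ℝ → ℝ) : Prop :=
  Measurable (Function.uncurry κ) ∧ (∀ x y, κ x y = κ y x) ∧ ∀ x y, 0 ≤ κ x y

/-- A kernel taking values in `[0,C]`. -/
def IsKernelBdd (κ : ℝ → ℝ → ℝ) (C : ℝ) : Prop :=
  Measurable (Function.uncurry κ) ∧ (∀ x y, κ x y = κ y x) ∧ ∀ x y, κ x y ∈ Icc 0 C

/-- A standard kernel: a symmetric measurable function `[0,1]² → [0,1]`. -/
def IsStdKernel (κ : ℝ → ℝ → ℝ) : Prop := IsKernelBdd κ 1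

/-- A doubly stochastic measure: a Borel measure on `[0,1]²` both of whose marginals
are Lebesgue measure on `[0,1]`. -/
def IsDoublyStochastic (μ : Measure (ℝ × ℝ)) : Prop :=
  μ.map Prod.fst = volume.restrict (Icc 0 1) ∧ μ.map Prod.snd = volume.restrict (Icc 0 1)

/-- The quantity `d_μ(κ₁,κ₂)`. -/
def dMu (μ : Measure (ℝ × ℝ)) (κ₁ κ₂ : ℝ → ℝ → ℝ) : ℝ :=
  sSup {r | ∃ S T : Set (ℝ × ℝ), MeasurableSet S ∧ MeasurableSet T ∧
    S ⊆ Icc 0 1 ×ˢ Icc 0 1 ∧ T ⊆ Icc 0 1 ×ˢ Icc 0 1 ∧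
    r = |∫ w in S ×ˢ T, (κ₁ w.1.1 w.2.1 - κ₂ w.1.2 w.2.2) ∂(μ.prod μ)|}

/-- Equivalence of kernels via a coupling. -/
def KernelEquiv (κ₁ κ₂ : ℝ → ℝ → ℝ) : Prop :=
  ∃ μ : Measure (ℝ × ℝ), IsDoublyStochastic μ ∧
    ∀ᵐ w ∂(μ.prod μ), κ₁ w.1.1 w.2.1 = κ₂ w.1.2 w.2.2

/-- `e_G(A,B)`: the number of ordered pairs `(i,j) ∈ A × B` with `ij ∈ E(G)`. -/
def ePairs {n : ℕ} (G : SimpleGraph (Fin n)) (A B : Finset (Fin n)) : ℕ :=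
  ((A ×ˢ B).filter fun q => G.Adj q.1 q.2).card

/-- The normalized density `d_p(A,B)`. -/
def dDens {n : ℕ} (p : ℝ) (G : SimpleGraph (Fin n)) (A B : Finset (Fin n)) : ℝ :=
  ePairs G A B / (p * A.card * B.card)

/-- A sequence of graphs has density bounded by `C`. -/
def DensityBoundedBy (p : ℕ → ℝ) (G : ∀ n, SimpleGraph (Fin n)) (C : ℝ) : Prop :=
  ∀ ε > (0:ℝ), ∀ δ > (0:ℝ), ∀ᶠ n in atTop, ∀ A B : Finset (Fin n),
    ε * n ≤ A.card → ε * n ≤ B.card → dDens (p n) (G n) A B ≤ C + δ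

/-- The parts of a partition of `Fin n` indexed by `Fin k`, given as a colouring. -/
def fiber {n k : ℕ} (c : Fin n → Fin k) (a : Fin k) : Finset (Fin n) :=
  Finset.univ.filter fun v => c v = a

/-- The finite-type kernel `G/Π` associated to a partition of the vertex set of `G`. -/
def partKernel {n k : ℕ} (p : ℝ) (G : SimpleGraph (Fin n)) (c : Fin n → Fin k) :
    ℝ → ℝ → ℝ := fun x y =>
  if h : x ∈ Ioc (0:ℝ) 1 ∧ y ∈ Ioc (0:ℝ) 1 ∧ idx n x < n ∧ idx n y < n then
    dDens p G (fiber c (c ⟨idx n x, h.2.2.1⟩)) (fiber c (c ⟨idx n y, h.2.2.2⟩))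
  else 0

/-- A partition is weakly `(ε,p)`-regular for `G`. -/
def WeaklyRegular {n k : ℕ} (p ε : ℝ) (G : SimpleGraph (Fin n)) (c : Fin n → Fin k) : Prop :=
  cutNorm (fun x y => graphKernel p G x y - partKernel p G c x y) ≤ ε

/-- `(A,B)` is an `(ε,p)`-regular pair for `G`. -/
def RegPair {n : ℕ} (p ε : ℝ) (G : SimpleGraph (Fin n)) (A B : Finset (Fin n)) : Prop :=
  ∀ A' ⊆ A, ∀ B' ⊆ B, ε * A.card ≤ A'.card → ε * B.card ≤ B'.card →
    |dDens p G A' B' - dDens p G A B| ≤ ε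

/-- An `(ε,p)`-regular partition of `G` into `k` parts. -/
def RegPartition {n k : ℕ} (p ε : ℝ) (G : SimpleGraph (Fin n)) (c : Fin n → Fin k) : Prop :=
  (∀ a : Fin k, (fiber c a).card = n / k ∨ (fiber c a).card = n / k + 1) ∧
  ((Finset.univ.filter (fun q : Fin k × Fin k =>
      q.1 < q.2 ∧ ¬ RegPair p ε G (fiber c q.1) (fiber c q.2))).card : ℝ)
    ≤ ε * ((k : ℝ) * ((k : ℝ) - 1) / 2)

/-- The number of walks `v₀v₁⋯v_ℓ` in `G` with `v_i ∈ X_i` for each `i`. -/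
def walkCount {n ℓ : ℕ} (G : SimpleGraph (Fin n)) (X : Fin (ℓ+1) → Finset (Fin n)) : ℕ :=
  Nat.card {v : Fin (ℓ+1) → Fin n //
    (∀ i, v i ∈ X i) ∧ ∀ i : Fin ℓ, G.Adj (v i.castSucc) (v i.succ)}

/-- `κ(X₀,X₁,…,X_ℓ)`: the kernel analogue of the walk count. -/
def kernelWalk {ℓ : ℕ} (κ : ℝ → ℝ → ℝ) (X : Fin (ℓ+1) → Set ℝ) : ℝ :=
  ∫ x in Set.univ.pi X, ∏ i : Fin ℓ, κ (x i.castSucc) (x i.succ)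

/-- `p_t(u,v)`: the number of paths of length `t` in `G` from `u` to `v`. -/
def pathCount {n : ℕ} (G : SimpleGraph (Fin n)) (t : ℕ) (u v : Fin n) : ℕ :=
  Nat.card {w : Fin (t+1) → Fin n // w 0 = u ∧ w (Fin.last t) = v ∧
    Function.Injective w ∧ ∀ i : Fin t, G.Adj (w i.castSucc) (w i.succ)}

/-- The `i`-th vertex on the `r`-th subdivided edge (from `u r` to `v r`, `ℓ` steps). -/
def pv (ℓ : ℕ) {k m : ℕ} (u v : Fin m → Fin k) (r : Fin m) (i : ℕ) :
    Fin k ⊕ (Fin m × Fin (ℓ - 1)) :=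
  if h0 : i = 0 then Sum.inl (u r)
  else if h : i < ℓ then Sum.inr (r, ⟨i - 1, by omega⟩)
  else Sum.inl (v r)

/-- The `(ℓ−1)`-fold subdivision of the loopless multigraph with `k` vertices and
edges `u r — v r` for `r < m`. -/
def multiSubdiv (ℓ : ℕ) {k m : ℕ} (u v : Fin m → Fin k) :
    SimpleGraph (Fin k ⊕ (Fin m × Fin (ℓ - 1))) :=
  SimpleGraph.fromRel fun a b =>
    ∃ r : Fin m, ∃ i : ℕ, i < ℓ ∧ a = pv ℓ u v r i ∧ b = pv ℓ u v r (i + 1)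

/-- Membership in the family `F_ℓ` of `(ℓ−1)`-fold subdivisions of finite loopless
multigraphs. -/
def InFamilyF (ℓ : ℕ) {N : ℕ} (F : SimpleGraph (Fin N)) : Prop :=
  ∃ (k m : ℕ) (u v : Fin m → Fin k), 1 ≤ k ∧ (∀ r, u r ≠ v r) ∧
    Nonempty (F ≃g multiSubdiv ℓ u v)

/-- The edges of a simple graph on `Fin k`, as ordered pairs `(i,j)` with `i < j`. -/
abbrev edgeIdx {k : ℕ} (F : SimpleGraph (Fin k)) : Type :=
  {q : Fin k × Fin k // q.1 < q.2 ∧ F.Adj q.1 q.2}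

/-- The `i`-th vertex on the subdivision of the edge `e` (`t` steps). -/
def spv (t : ℕ) {k : ℕ} {F : SimpleGraph (Fin k)} (e : edgeIdx F) (i : ℕ) :
    Fin k ⊕ (edgeIdx F × Fin (t - 1)) :=
  if h0 : i = 0 then Sum.inl e.1.1
  else if h : i < t then Sum.inr (e, ⟨i - 1, by omega⟩)
  else Sum.inl e.1.2

/-- The `t`-subdivision `Sub_t(F)` of a simple graph `F`: each edge is replaced by a
path of length `t` through `t−1` new internal vertices. -/
def subdiv (t : ℕ) {k : ℕ} (F : SimpleGraph (Fin k)) :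
    SimpleGraph (Fin k ⊕ (edgeIdx F × Fin (t - 1))) :=
  SimpleGraph.fromRel fun a b =>
    ∃ e : edgeIdx F, ∃ i : ℕ, i < t ∧ a = spv t e i ∧ b = spv t e (i + 1)

/-- The `t`-th power kernel `κ^t`. -/
def kpow (κ : ℝ → ℝ → ℝ) : ℕ → ℝ → ℝ → ℝ
  | 0 => fun _ _ => 0
  | 1 => κ
  | (n + 2) => fun x y => ∫ z in Icc (0:ℝ) 1, kpow κ (n + 1) x z * κ z y

/-- `φ : Fin ℓ → Fin n` is a homomorphism from `F` to `G`. -/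
def IsHom {α β : Type*} (F : SimpleGraph α) (G : SimpleGraph β) (φ : α → β) : Prop :=
  ∀ i j, F.Adj i j → G.Adj (φ i) (φ j)

/-- `F` is flat over its induced subgraph `F'` on the first `ℓ` vertices, for the
sequence `(G_n)` with normalizing function `p`. -/
def FlatOver (p : ℕ → ℝ) (G : ∀ n, SimpleGraph (Fin n)) {k ℓ : ℕ} (h : ℓ ≤ k)
    (F : SimpleGraph (Fin k)) : Prop :=
  ∀ ε > (0:ℝ), ∀ᶠ n in atTop,
    ((Finset.univ.filter (fun φ : Fin ℓ → Fin n =>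
        IsHom (F.comap (Fin.castLE h)) (G n) φ ∧
        ε * ((n:ℝ) ^ (k - ℓ) * p n ^ (edgeCount F - edgeCount (F.comap (Fin.castLE h)))) <
          |((Finset.univ.filter (fun ψ : Fin k → Fin n =>
              IsHom F (G n) ψ ∧ ψ ∘ Fin.castLE h = φ)).card : ℝ) -
            (n:ℝ) ^ (k - ℓ) * p n ^ (edgeCount F - edgeCount (F.comap (Fin.castLE h)))|)).card
      : ℝ)
      ≤ ε * ((Finset.univ.filter (fun φ : Fin ℓ → Fin n =>
          IsHom (F.comap (Fin.castLE h)) (G n) φ)).card : ℝ)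

/-- The set of density matrices of balanced partitions of `V(G)` into `k` nonempty
parts. -/
def MsetG (k : ℕ) {n : ℕ} (p : ℝ) (G : SimpleGraph (Fin n)) : Set (Fin k → Fin k → ℝ) :=
  {M | ∃ c : Fin n → Fin k, Function.Surjective c ∧
    (∀ a b, (fiber c a).card ≤ (fiber c b).card + 1) ∧
    M = fun a b => dDens p G (fiber c a) (fiber c b)}

/-- The closed set of density matrices of partitions of `[0,1]` into `k` parts of
measure `1/k`, for a kernel `κ`. -/
def MsetK (k : ℕ) (κ : ℝ → ℝ → ℝ) : Set (Fin k → Fin k → ℝ) :=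
  closure {M | ∃ Q : Fin k → Set ℝ, (∀ a, MeasurableSet (Q a)) ∧
    (Pairwise fun a b => Disjoint (Q a) (Q b)) ∧ (⋃ a, Q a) = Icc 0 1 ∧
    (∀ a, volume (Q a) = 1 / (k : ℝ≥0∞)) ∧
    M = fun a b => (k : ℝ)^2 * ∫ q in (Q a) ×ˢ (Q b), κ q.1 q.2}

end



noncomputable section

namespace BKaux

section PiLemmas
variable {ι : Type*} [Fintype ι]

lemma restrict_pi_pi (μ : ι → Measure ℝ) [∀ i, SigmaFinite (μ i)]
    (s : ι → Set ℝ) (hs : ∀ i, MeasurableSet (s i)) :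
    (Measure.pi μ).restrict (Set.univ.pi s) = Measure.pi (fun i => (μ i).restrict (s i)) := by
  refine (Measure.pi_eq fun t ht => ?_).symm
  rw [Measure.restrict_apply (MeasurableSet.univ_pi ht), ← Set.pi_inter_distrib, Measure.pi_pi]
  exact Finset.prod_congr rfl fun i _ => (Measure.restrict_apply (ht i)).symm

lemma pi_smul (c : ℝ≥0∞) (hc : c ≠ ∞) (μ : Measure ℝ) [IsProbabilityMeasure μ] :
    Measure.pi (fun _ : ι => c • μ) = c ^ (Fintype.card ι) • Measure.pi (fun _ : ι => μ) := by
  haveI : IsFiniteMeasure (c • μ) :=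
    ⟨by rw [Measure.smul_apply, measure_univ, smul_eq_mul, mul_one]; exact hc.lt_top⟩
  refine Measure.pi_eq fun t ht => ?_
  simp only [Measure.smul_apply, smul_eq_mul, Measure.pi_pi]
  rw [Finset.prod_mul_distrib, Finset.prod_const, Finset.card_univ]

lemma lintegral_pi_prod {n : ℕ} (μ : Measure ℝ) [SigmaFinite μ] (f : Fin n → ℝ → ℝ≥0∞)
    (hf : ∀ i, Measurable (f i)) :
    ∫⁻ x, ∏ i, f i (x i) ∂(Measure.pi fun _ : Fin n => μ) = ∏ i, ∫⁻ t, f i t ∂μ := by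
  induction n with
  | zero =>
      simp only [Finset.univ_eq_empty, Finset.prod_empty, lintegral_one, Measure.pi_univ]
  | succ n ih =>
      have h := measurePreserving_piFinSuccAbove (fun _ : Fin (n + 1) => μ) 0
      set e := MeasurableEquiv.piFinSuccAbove (fun _ : Fin (n + 1) => ℝ) 0 with he
      have key : ∫⁻ x, ∏ i, f i (x i) ∂(Measure.pi fun _ : Fin (n + 1) => μ)
          = ∫⁻ z, ∏ i, f i (e.symm z i) ∂(μ.prod (Measure.pi fun _ : Fin n => μ)) := by
        calc ∫⁻ x, ∏ i, f i (x i) ∂(Measure.pi fun _ : Fin (n + 1) => μ)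
            = ∫⁻ x, (fun z => ∏ i, f i (e.symm z i)) (e x)
                ∂(Measure.pi fun _ : Fin (n + 1) => μ) :=
              lintegral_congr fun x => by simp
          _ = ∫⁻ z, ∏ i, f i (e.symm z i) ∂(μ.prod (Measure.pi fun _ : Fin n => μ)) :=
              (MeasurePreserving.lintegral_map_equiv (fun z => ∏ i, f i (e.symm z i)) e h).symm
      have hint : Measurable fun z : ℝ × (Fin n → ℝ) => ∏ i, f i (e.symm z i) :=
        Finset.measurable_prod Finset.univ fun i _ =>
          (hf i).comp ((measurable_pi_apply i).comp e.symm.measurable)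
      rw [key, lintegral_prod _ hint.aemeasurable]
      have hz : ∀ (a : ℝ) (y : Fin n → ℝ) (i : Fin n), e.symm (a, y) i.succ = y i := by
        intro a y i
        simp [he, MeasurableEquiv.piFinSuccAbove_symm_apply, Fin.insertNth_zero']
      have hz0 : ∀ (a : ℝ) (y : Fin n → ℝ), e.symm (a, y) 0 = a := by
        intro a y
        simp [he, MeasurableEquiv.piFinSuccAbove_symm_apply, Fin.insertNth_zero']
      calc ∫⁻ a, ∫⁻ y, ∏ i, f i (e.symm (a, y) i) ∂(Measure.pi fun _ : Fin n => μ) ∂μ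
          = ∫⁻ a, ∫⁻ y, f 0 a * ∏ i : Fin n, f i.succ (y i)
              ∂(Measure.pi fun _ : Fin n => μ) ∂μ := by
            refine lintegral_congr fun a => lintegral_congr fun y => ?_
            rw [Fin.prod_univ_succ, hz0]
            exact congrArg _ (Finset.prod_congr rfl fun i _ => by rw [hz])
        _ = ∫⁻ a, f 0 a * ∏ i : Fin n, ∫⁻ t, f i.succ t ∂μ ∂μ := by
            refine lintegral_congr fun a => ?_
            rw [lintegral_const_mul _ (Finset.measurable_prod Finset.univ
              (fun i _ => (hf i.succ).comp (measurable_pi_apply i))),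
              ih _ (fun i => hf i.succ)]
        _ = (∫⁻ t, f 0 t ∂μ) * ∏ i : Fin n, ∫⁻ t, f i.succ t ∂μ :=
            lintegral_mul_const _ (hf 0)
        _ = ∏ i, ∫⁻ t, f i t ∂μ := by rw [Fin.prod_univ_succ]


lemma jensen_pow {Ω : Type*} [MeasurableSpace Ω] (P : Measure Ω) [IsProbabilityMeasure P] {f : Ω → ℝ≥0∞}
    (hf : AEMeasurable f P) (m : ℕ) :
    (∫⁻ t, f t ∂P) ^ m ≤ ∫⁻ t, (f t) ^ m ∂P := by
  match m with
  | 0 => simp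
  | 1 => simp
  | (n + 2) =>
    set m := n + 2
    have hm1 : (1 : ℝ) < (m : ℝ) := by exact_mod_cast by omega
    have hpq := Real.HolderConjugate.conjExponent hm1
    have h1 : ∫⁻ t, f t ∂P ≤ (∫⁻ t, f t ^ (m : ℝ) ∂P) ^ (1 / (m : ℝ)) := by
      have := ENNReal.lintegral_mul_le_Lp_mul_Lq P hpq hf aemeasurable_const (g := fun _ => 1)
      simpa using this
    calc (∫⁻ t, f t ∂P) ^ m ≤ ((∫⁻ t, f t ^ (m : ℝ) ∂P) ^ (1 / (m : ℝ))) ^ m :=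
          pow_le_pow_left₀ zero_le h1 m
      _ = (∫⁻ t, f t ^ (m : ℝ) ∂P) ^ ((1 / (m : ℝ)) * m) := by
          rw [← ENNReal.rpow_natCast (_ ^ (1 / (m : ℝ))) m, ← ENNReal.rpow_mul]
      _ = ∫⁻ t, f t ^ m ∂P := by
          rw [one_div, inv_mul_cancel₀ (by positivity), ENNReal.rpow_one]
          exact lintegral_congr fun t => ENNReal.rpow_natCast _ m

lemma pi_map_pair (μ : ι → Measure ℝ) [∀ i, IsProbabilityMeasure (μ i)] {i j : ι}
    (hij : i ≠ j) :
    (Measure.pi μ).map (fun x => (x i, x j)) = (μ i).prod (μ j) := by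
  refine (Measure.prod_eq fun s t hs ht => ?_).symm
  rw [Measure.map_apply ((measurable_pi_apply i).prodMk (measurable_pi_apply j)) (hs.prod ht)]
  have hset : (fun x : ι → ℝ => (x i, x j)) ⁻¹' (s ×ˢ t)
      = Set.univ.pi (fun l => if l = i then s else if l = j then t else univ) := by
    ext x
    simp only [mem_preimage, mem_prod, mem_univ_pi]
    constructor
    · rintro ⟨h1, h2⟩ l
      split_ifs with h h'
      · subst h; exact h1
      · subst h'; exact h2
      · trivial
    · intro hl
      refine ⟨?_, ?_⟩
      · have := hl i; simpa using this
      · have := hl j; simpa [hij.symm] using this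
  rw [hset, Measure.pi_pi]
  have houter : ∀ l : ι, l ∉ ({i, j} : Finset ι) →
      μ l (if l = i then s else if l = j then t else univ) = 1 := by
    intro l hl
    simp only [Finset.mem_insert, Finset.mem_singleton, not_or] at hl
    rw [if_neg hl.1, if_neg hl.2]
    exact measure_univ
  rw [← Finset.prod_subset (Finset.subset_univ ({i, j} : Finset ι))
    (fun l _ hl => houter l hl), Finset.prod_pair hij]
  rw [if_pos rfl, if_neg hij.symm, if_pos rfl]

lemma prod_smul_left (c : ℝ≥0∞) (hc : c ≠ ∞) (μ ν : Measure ℝ)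
    [IsFiniteMeasure μ] [SigmaFinite ν] :
    (c • μ).prod ν = c • (μ.prod ν) := by
  haveI : IsFiniteMeasure (c • μ) :=
    ⟨by rw [Measure.smul_apply, smul_eq_mul]; exact ENNReal.mul_lt_top hc.lt_top (measure_lt_top μ _)⟩
  refine (Measure.prod_eq fun s t hs ht => ?_)
  simp only [Measure.smul_apply, smul_eq_mul, Measure.prod_prod, mul_assoc]

lemma prod_smul_right (c : ℝ≥0∞) (hc : c ≠ ∞) (μ ν : Measure ℝ)
    [SigmaFinite μ] [IsFiniteMeasure ν] :
    μ.prod (c • ν) = c • (μ.prod ν) := by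
  haveI : IsFiniteMeasure (c • ν) :=
    ⟨by rw [Measure.smul_apply, smul_eq_mul]; exact ENNReal.mul_lt_top hc.lt_top (measure_lt_top ν _)⟩
  refine (Measure.prod_eq fun s t hs ht => ?_)
  simp only [Measure.smul_apply, smul_eq_mul, Measure.prod_prod]
  ring

/-- The complete bipartite graph on `Fin (m + m)`. -/
def bip (m : ℕ) : SimpleGraph (Fin (m + m)) where
  Adj i j := ((i : ℕ) < m ∧ m ≤ (j : ℕ)) ∨ ((j : ℕ) < m ∧ m ≤ (i : ℕ))
  symm := ⟨fun i j h => Or.symm h⟩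
  loopless := ⟨fun i h => by rcases h with ⟨h1, h2⟩ | ⟨h1, h2⟩ <;> omega⟩

lemma bip_mem (m : ℕ) (p : Fin m × Fin m) :
    s(Fin.castAdd m p.1, Fin.natAdd m p.2) ∈ (bip m).edgeFinset := by
  rw [SimpleGraph.mem_edgeFinset, SimpleGraph.mem_edgeSet]
  exact Or.inl ⟨by simpa using p.1.isLt, by simp⟩

lemma bip_inj (m : ℕ) (p q : Fin m × Fin m)
    (h : s(Fin.castAdd m p.1, Fin.natAdd m p.2) = s(Fin.castAdd m q.1, Fin.natAdd m q.2)) :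
    p = q := by
  rcases Sym2.eq_iff.1 h with ⟨h1, h2⟩ | ⟨h1, h2⟩
  · have e1 : (p.1 : ℕ) = q.1 := by simpa using congrArg Fin.val h1
    have e2 : (m : ℕ) + (p.2 : ℕ) = m + (q.2 : ℕ) := by simpa using congrArg Fin.val h2
    exact Prod.ext (Fin.ext e1) (Fin.ext (by omega))
  · have e1 : (p.1 : ℕ) = m + (q.2 : ℕ) := congrArg Fin.val h1
    exact absurd e1 (by have := p.1.isLt; omega)

lemma bip_surj (m : ℕ) : ∀ e ∈ (bip m).edgeFinset,
    ∃ p : Fin m × Fin m, s(Fin.castAdd m p.1, Fin.natAdd m p.2) = e := by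
  intro e
  induction e using Sym2.ind with
  | _ u v =>
    intro he
    have hadj : (bip m).Adj u v := (bip m).mem_edgeSet.1 (SimpleGraph.mem_edgeFinset.1 he)
    rcases hadj with ⟨h1, h2⟩ | ⟨h1, h2⟩
    · refine ⟨(⟨(u : ℕ), h1⟩, ⟨(v : ℕ) - m, by have := v.isLt; omega⟩), ?_⟩
      refine Sym2.eq_iff.2 (Or.inl ⟨Fin.ext (by simp), Fin.ext (by simp; omega)⟩)
    · refine ⟨(⟨(v : ℕ), h1⟩, ⟨(u : ℕ) - m, by have := u.isLt; omega⟩), ?_⟩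
      refine Sym2.eq_iff.2 (Or.inr ⟨Fin.ext (by simp), Fin.ext (by simp; omega)⟩)

lemma bip_prod {M : Type*} [CommMonoid M] (m : ℕ) (f : Sym2 (Fin (m + m)) → M) :
    ∏ e ∈ (bip m).edgeFinset, f e
      = ∏ p : Fin m × Fin m, f s(Fin.castAdd m p.1, Fin.natAdd m p.2) := by
  refine (Finset.prod_bij (fun p _ => s(Fin.castAdd m p.1, Fin.natAdd m p.2))
    (fun p _ => bip_mem m p) (fun p _ q _ h => bip_inj m p q h) ?_ (fun p _ => rfl)).symm
  intro e he
  obtain ⟨p, hp⟩ := bip_surj m e he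
  exact ⟨p, Finset.mem_univ p, hp⟩

lemma bip_edgeCount (m : ℕ) : edgeCount (bip m) = m * m := by
  have hcard : (Finset.univ : Finset (Fin m × Fin m)).card = (bip m).edgeFinset.card :=
    Finset.card_bij (fun p _ => s(Fin.castAdd m p.1, Fin.natAdd m p.2))
      (fun p _ => bip_mem m p) (fun p _ q _ h => bip_inj m p q h)
      (fun e he => by obtain ⟨p, hp⟩ := bip_surj m e he; exact ⟨p, Finset.mem_univ p, hp⟩)
  rw [edgeCount, Nat.card_coe_set_eq, ← SimpleGraph.coe_edgeFinset,
    Set.ncard_coe_finset, ← hcard]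
  simp


end PiLemmas

instance : IsProbabilityMeasure ((volume : Measure ℝ).restrict (Icc 0 1)) :=
  ⟨by rw [Measure.restrict_apply_univ, Real.volume_Icc]; norm_num⟩

lemma edgeCount_eq_card {α : Type*} [Fintype α] (F : SimpleGraph α) :
    edgeCount F = F.edgeFinset.card := by
  rw [edgeCount, Nat.card_coe_set_eq, ← SimpleGraph.coe_edgeFinset, Set.ncard_coe_finset]

lemma easy_dir (κ : ℝ → ℝ → ℝ) (hκ : IsKernel κ) (C : ℝ)
    (hae : ∀ᵐ q ∂(volume.restrict (Icc (0:ℝ) 1 ×ˢ Icc (0:ℝ) 1)), κ q.1 q.2 ≤ C)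
    (k : ℕ) (F : SimpleGraph (Fin k)) :
    homDensityL F κ ≤ ENNReal.ofReal C ^ edgeCount F := by
  obtain ⟨hmeas, hsym, _⟩ := hκ
  set sq : Set (ℝ × ℝ) := Icc (0:ℝ) 1 ×ˢ Icc (0:ℝ) 1 with hsqdef
  have hsq : MeasurableSet sq := measurableSet_Icc.prod measurableSet_Icc
  set Bad : Set (ℝ × ℝ) := {q : ℝ × ℝ | C < κ q.1 q.2} ∩ sq with hBaddef
  have hBadMeas : MeasurableSet Bad :=
    (measurableSet_lt measurable_const hmeas).inter hsq
  have hBad : volume Bad = 0 := by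
    rw [ae_iff] at hae
    rw [Measure.restrict_apply' hsq] at hae
    simpa only [hBaddef, not_le] using hae
  -- the pi measure
  set μ0 : Measure (Fin k → ℝ) :=
    Measure.pi (fun _ : Fin k => (volume : Measure ℝ).restrict (Icc 0 1)) with hμ0
  have hμ0eq : (volume : Measure (Fin k → ℝ)).restrict (Set.univ.pi fun _ => Icc (0:ℝ) 1)
      = μ0 := by
    rw [hμ0, volume_pi, restrict_pi_pi _ _ (fun _ => measurableSet_Icc)]
  have key : ∀ᵐ x ∂μ0, ∀ e ∈ F.edgeFinset,
      Sym2.lift ⟨fun i j => ENNReal.ofReal ((κ (x i) (x j) + κ (x j) (x i)) / 2),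
        fun i j => by dsimp only; rw [add_comm (κ (x i) (x j)) (κ (x j) (x i))]⟩ e
        ≤ ENNReal.ofReal C := by
    rw [Filter.eventually_all_finset]
    intro e he
    induction e using Sym2.ind with
    | _ i j =>
      have hadj : F.Adj i j := F.mem_edgeSet.1 (SimpleGraph.mem_edgeFinset.1 he)
      have hij : i ≠ j := hadj.ne
      have hnull : μ0 {x : Fin k → ℝ | (x i, x j) ∈ Bad} = 0 := by
        have : {x : Fin k → ℝ | (x i, x j) ∈ Bad}
            = (fun x : Fin k → ℝ => (x i, x j)) ⁻¹' Bad := rfl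
        rw [this, ← Measure.map_apply
          ((measurable_pi_apply i).prodMk (measurable_pi_apply j)) hBadMeas,
          pi_map_pair _ hij, Measure.prod_restrict, ← Measure.volume_eq_prod,
          Measure.restrict_apply' hsq]
        exact measure_mono_null inter_subset_left hBad
      have h1 : ∀ᵐ x ∂μ0, (x i, x j) ∉ Bad := by
        rw [ae_iff]
        simpa using hnull
      have h2 : ∀ᵐ x ∂μ0, x ∈ Set.univ.pi fun _ : Fin k => Icc (0:ℝ) 1 := by
        rw [← hμ0eq]
        exact ae_restrict_mem (MeasurableSet.univ_pi fun _ => measurableSet_Icc)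
      filter_upwards [h1, h2] with x hx1 hx2
      rw [Sym2.lift_mk]
      show ENNReal.ofReal ((κ (x i) (x j) + κ (x j) (x i)) / 2) ≤ ENNReal.ofReal C
      have hxi : x i ∈ Icc (0:ℝ) 1 := hx2 i trivial
      have hxj : x j ∈ Icc (0:ℝ) 1 := hx2 j trivial
      have hle : κ (x i) (x j) ≤ C := by
        by_contra hlt
        exact hx1 ⟨not_le.1 hlt, hxi, hxj⟩
      have : (κ (x i) (x j) + κ (x j) (x i)) / 2 = κ (x i) (x j) := by
        rw [hsym (x j) (x i), add_self_div_two]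
      rw [this]
      exact ENNReal.ofReal_le_ofReal hle
  rw [homDensityL, hμ0eq, edgeCount_eq_card]
  calc ∫⁻ x, ∏ e ∈ F.edgeFinset,
        Sym2.lift ⟨fun i j => ENNReal.ofReal ((κ (x i) (x j) + κ (x j) (x i)) / 2),
          fun i j => by dsimp only; rw [add_comm (κ (x i) (x j)) (κ (x j) (x i))]⟩ e ∂μ0
      ≤ ∫⁻ _, ENNReal.ofReal C ^ F.edgeFinset.card ∂μ0 := by
        refine lintegral_mono_ae ?_
        filter_upwards [key] with x hx
        calc ∏ e ∈ F.edgeFinset, _ ≤ ∏ _e ∈ F.edgeFinset, ENNReal.ofReal C :=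
              Finset.prod_le_prod' hx
          _ = ENNReal.ofReal C ^ F.edgeFinset.card := Finset.prod_const _
    _ = ENNReal.ofReal C ^ F.edgeFinset.card := by
        haveI : IsProbabilityMeasure μ0 := by rw [hμ0]; infer_instance
        simp

set_option maxHeartbeats 1000000 in
lemma hard_dir (κ : ℝ → ℝ → ℝ) (hκ : IsKernel κ) (C : ℝ) (hC : 0 ≤ C)
    (h : ∀ (k : ℕ) (F : SimpleGraph (Fin k)), homDensityL F κ ≤ ENNReal.ofReal C ^ edgeCount F) :
    ∀ᵐ q ∂(volume.restrict (Icc (0:ℝ) 1 ×ˢ Icc (0:ℝ) 1)), κ q.1 q.2 ≤ C := by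
  obtain ⟨hmeas, hsym, hpos⟩ := hκ
  by_contra hae
  set sq : Set (ℝ × ℝ) := Icc (0:ℝ) 1 ×ˢ Icc (0:ℝ) 1 with hsqdef
  have hsq : MeasurableSet sq := measurableSet_Icc.prod measurableSet_Icc
  have h0 : volume ({q : ℝ × ℝ | C < κ q.1 q.2} ∩ sq) ≠ 0 := by
    intro h0
    apply hae
    rw [ae_iff, Measure.restrict_apply' hsq]
    simpa only [not_le] using h0
  have hU : {q : ℝ × ℝ | C < κ q.1 q.2} ∩ sq
      = ⋃ n : ℕ, ({q : ℝ × ℝ | C + 1/(n+1) ≤ κ q.1 q.2} ∩ sq) := by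
    ext q
    simp only [mem_inter_iff, mem_setOf_eq, mem_iUnion]
    constructor
    · rintro ⟨hq, hq2⟩
      obtain ⟨n, hn⟩ := exists_nat_one_div_lt (sub_pos.2 hq)
      exact ⟨n, ⟨by linarith, hq2⟩⟩
    · rintro ⟨n, hn, hq2⟩
      have hp : (0:ℝ) < 1/(n+1) := by positivity
      exact ⟨by linarith, hq2⟩
  obtain ⟨n, hn⟩ : ∃ n : ℕ, volume ({q : ℝ × ℝ | C + 1/(n+1) ≤ κ q.1 q.2} ∩ sq) ≠ 0 := by
    by_contra hall
    push_neg at hall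
    exact h0 (by rw [hU]; exact measure_iUnion_null fun n => hall n)
  set C' : ℝ := C + 1/(n+1) with hC'def
  have hCC' : C < C' := lt_add_of_pos_right C (by positivity)
  have hC'pos : 0 < C' := lt_of_le_of_lt hC hCC'
  clear_value C'
  set S : Set (ℝ × ℝ) := {q : ℝ × ℝ | C' ≤ κ q.1 q.2} ∩ sq with hSdef
  have hS : MeasurableSet S := (measurableSet_le measurable_const hmeas).inter hsq
  have hSvol : volume S ≠ 0 := hn
  have hSsq : S ⊆ sq := inter_subset_right
  set D : ℝ := (C' + C)/2 with hDdef
  clear_value D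
  have hCD : C < D := by rw [hDdef]; linarith [hCC']
  have hDC' : D < C' := by rw [hDdef]; linarith
  have hDpos : 0 < D := lt_of_le_of_lt hC hCD
  set θ : ℝ := D / C' with hθdef
  clear_value θ
  have hθpos : 0 < θ := by rw [hθdef]; exact div_pos hDpos hC'pos
  have hθ1 : ENNReal.ofReal θ < 1 := by
    rw [ENNReal.ofReal_lt_one, hθdef]
    exact (div_lt_one hC'pos).2 hDC'
  -- density point
  have hdens := Besicovitch.ae_tendsto_measure_inter_div (volume : Measure (ℝ × ℝ)) S
  have hres0 : volume.restrict S ≠ 0 := by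
    intro hz
    apply hSvol
    have := congrArg (fun μ : Measure (ℝ × ℝ) => μ Set.univ) hz
    simpa [Measure.restrict_apply_univ] using this
  haveI := ae_neBot.2 hres0
  obtain ⟨z, hz, hzS⟩ := (hdens.and (ae_restrict_mem hS)).exists
  have hball : ∀ r : ℝ, 0 < r → volume (Metric.closedBall z r)
      = ENNReal.ofReal (2*r) * ENNReal.ofReal (2*r) := by
    intro r hr
    rw [← closedBall_prod_same, Measure.volume_eq_prod, Measure.prod_prod,
      Real.volume_closedBall, Real.volume_closedBall]
  obtain ⟨r, hr1, hr0'⟩ := ((hz.eventually (eventually_gt_nhds hθ1)).and self_mem_nhdsWithin).exists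
  have hr0 : (0:ℝ) < r := hr0'
  have hBpos : volume (Metric.closedBall z r) ≠ 0 := by
    rw [hball r hr0]
    exact mul_ne_zero (by simp [ENNReal.ofReal_eq_zero]; linarith)
      (by simp [ENNReal.ofReal_eq_zero]; linarith)
  have hBtop : volume (Metric.closedBall z r) ≠ ∞ := by
    rw [hball r hr0]
    exact ENNReal.mul_ne_top ENNReal.ofReal_ne_top ENNReal.ofReal_ne_top
  have hSB : ENNReal.ofReal θ * volume (Metric.closedBall z r)
      ≤ volume (S ∩ Metric.closedBall z r) :=
    le_of_lt ((ENNReal.lt_div_iff_mul_lt (Or.inl hBpos) (Or.inl hBtop)).1 hr1)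
  have hz1 : z.1 ∈ Icc (0:ℝ) 1 := (hSsq hzS).1
  have hz2 : z.2 ∈ Icc (0:ℝ) 1 := (hSsq hzS).2
  set I : Set ℝ := Icc 0 1 ∩ Icc (z.1 - r) (z.1 + r) with hIdef
  set J : Set ℝ := Icc 0 1 ∩ Icc (z.2 - r) (z.2 + r) with hJdef
  have hI : MeasurableSet I := measurableSet_Icc.inter measurableSet_Icc
  have hJ : MeasurableSet J := measurableSet_Icc.inter measurableSet_Icc
  have hIsub : I ⊆ Icc 0 1 := inter_subset_left
  have hJsub : J ⊆ Icc 0 1 := inter_subset_left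
  set α : ℝ≥0∞ := volume I with hαdef
  set β : ℝ≥0∞ := volume J with hβdef
  have hIvol : α = ENNReal.ofReal (min 1 (z.1 + r) - max 0 (z.1 - r)) := by
    rw [hαdef, hIdef, Icc_inter_Icc, Real.volume_Icc]
  have hJvol : β = ENNReal.ofReal (min 1 (z.2 + r) - max 0 (z.2 - r)) := by
    rw [hβdef, hJdef, Icc_inter_Icc, Real.volume_Icc]
  have hα0 : α ≠ 0 := by
    rw [hIvol]
    have h1 : max 0 (z.1 - r) < min 1 (z.1 + r) :=
      max_lt (lt_min (by norm_num) (by have := hz1.1; linarith))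
        (lt_min (by have := hz1.2; linarith) (by linarith))
    simp only [ne_eq, ENNReal.ofReal_eq_zero, not_le]
    linarith
  have hβ0 : β ≠ 0 := by
    rw [hJvol]
    have h1 : max 0 (z.2 - r) < min 1 (z.2 + r) :=
      max_lt (lt_min (by norm_num) (by have := hz2.1; linarith))
        (lt_min (by have := hz2.2; linarith) (by linarith))
    simp only [ne_eq, ENNReal.ofReal_eq_zero, not_le]
    linarith
  have hαtop : α ≠ ∞ := by rw [hIvol]; exact ENNReal.ofReal_ne_top
  have hβtop : β ≠ ∞ := by rw [hJvol]; exact ENNReal.ofReal_ne_top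
  have hαball : α ≤ ENNReal.ofReal (2*r) := by
    calc α ≤ volume (Icc (z.1 - r) (z.1 + r)) := measure_mono inter_subset_right
      _ = ENNReal.ofReal (2*r) := by rw [Real.volume_Icc]; congr 1; ring
  have hβball : β ≤ ENNReal.ofReal (2*r) := by
    calc β ≤ volume (Icc (z.2 - r) (z.2 + r)) := measure_mono inter_subset_right
      _ = ENNReal.ofReal (2*r) := by rw [Real.volume_Icc]; congr 1; ring
  have hIJ : I ×ˢ J = sq ∩ Metric.closedBall z r := by
    rw [hIdef, hJdef, ← Set.prod_inter_prod, ← Real.closedBall_eq_Icc, ← Real.closedBall_eq_Icc,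
      closedBall_prod_same]
  have hSIJ : S ∩ (I ×ˢ J) = S ∩ Metric.closedBall z r := by
    rw [hIJ, ← inter_assoc, inter_eq_self_of_subset_left hSsq]
  have hαβ : α * β ≤ volume (Metric.closedBall z r) := by
    rw [hball r hr0]
    exact mul_le_mul' hαball hβball
  have hkey : ENNReal.ofReal θ * (α * β) ≤ volume (S ∩ I ×ˢ J) := by
    rw [hSIJ]
    exact le_trans (mul_le_mul_right hαβ _) hSB
  -- probability measures
  haveI hIfin : IsFiniteMeasure (volume.restrict I) :=
    ⟨by rw [Measure.restrict_apply_univ]; exact hαtop.lt_top⟩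
  haveI hJfin : IsFiniteMeasure (volume.restrict J) :=
    ⟨by rw [Measure.restrict_apply_univ]; exact hβtop.lt_top⟩
  set PI : Measure ℝ := α⁻¹ • (volume.restrict I) with hPIdef
  set QJ : Measure ℝ := β⁻¹ • (volume.restrict J) with hQJdef
  haveI hPIprob : IsProbabilityMeasure PI :=
    ⟨by rw [hPIdef, Measure.smul_apply, Measure.restrict_apply_univ, smul_eq_mul];
        exact ENNReal.inv_mul_cancel hα0 hαtop⟩
  haveI hQJprob : IsProbabilityMeasure QJ :=
    ⟨by rw [hQJdef, Measure.smul_apply, Measure.restrict_apply_univ, smul_eq_mul];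
        exact ENNReal.inv_mul_cancel hβ0 hβtop⟩
  have hPIres : volume.restrict I = α • PI := by
    rw [hPIdef, smul_smul, ENNReal.mul_inv_cancel hα0 hαtop, one_smul]
  have hQJres : volume.restrict J = β • QJ := by
    rw [hQJdef, smul_smul, ENNReal.mul_inv_cancel hβ0 hβtop, one_smul]
  -- the kernel as an ℝ≥0∞ function
  set W : ℝ → ℝ → ℝ≥0∞ := fun x y => ENNReal.ofReal (κ x y) with hWdef
  have hWm : Measurable (fun q : ℝ × ℝ => W q.1 q.2) := ENNReal.measurable_ofReal.comp hmeas
  have hWc : ∀ {γ : Type} [MeasurableSpace γ] {u v : γ → ℝ}, Measurable u → Measurable v →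
      Measurable fun x => W (u x) (v x) := fun hu hv => hWm.comp (hu.prodMk hv)
  set A : ℝ≥0∞ := ∫⁻ t, ∫⁻ s, W s t ∂PI ∂QJ with hAdef
  -- lower bound for A
  have hprodS : ENNReal.ofReal θ ≤ (PI.prod QJ) S := by
    have hval : (PI.prod QJ) S = α⁻¹ * (β⁻¹ * volume (S ∩ I ×ˢ J)) := by
      rw [hPIdef, hQJdef, prod_smul_left _ (by simpa using hα0) _ _,
        prod_smul_right _ (by simpa using hβ0) _ _, Measure.prod_restrict,
        ← Measure.volume_eq_prod, Measure.smul_apply, Measure.smul_apply,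
        Measure.restrict_apply' (hI.prod hJ), smul_eq_mul, smul_eq_mul]
    rw [hval]
    calc ENNReal.ofReal θ
        = α⁻¹ * (β⁻¹ * (ENNReal.ofReal θ * (α * β))) := by
          rw [show α⁻¹ * (β⁻¹ * (ENNReal.ofReal θ * (α * β)))
              = ((α⁻¹ * α) * ((β⁻¹ * β) * ENNReal.ofReal θ)) from by ring,
            ENNReal.inv_mul_cancel hα0 hαtop, ENNReal.inv_mul_cancel hβ0 hβtop,
            one_mul, one_mul]
      _ ≤ α⁻¹ * (β⁻¹ * volume (S ∩ I ×ˢ J)) := by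
          exact mul_le_mul_right (mul_le_mul_right hkey _) _
  have hAD : ENNReal.ofReal D ≤ A := by
    set g : ℝ × ℝ → ℝ≥0∞ := S.indicator (fun _ => ENNReal.ofReal C') with hgdef
    have hgm : Measurable g := measurable_const.indicator hS
    have step1 : A = ∫⁻ w, W w.2 w.1 ∂(QJ.prod PI) := by
      rw [hAdef, lintegral_prod (fun w : ℝ × ℝ => W w.2 w.1)
        ((hWm.comp measurable_swap).aemeasurable)]
    have step2 : ∫⁻ w, g (w.2, w.1) ∂(QJ.prod PI) ≤ ∫⁻ w, W w.2 w.1 ∂(QJ.prod PI) := by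
      refine lintegral_mono fun w => ?_
      by_cases hw : (w.2, w.1) ∈ S
      · rw [hgdef, indicator_of_mem hw]
        exact ENNReal.ofReal_le_ofReal hw.1
      · rw [hgdef, indicator_of_notMem hw]
        exact zero_le
    have step3 : ∫⁻ w, g (w.2, w.1) ∂(QJ.prod PI) = ENNReal.ofReal C' * (PI.prod QJ) S := by
      have : ∫⁻ w, g (w.2, w.1) ∂(QJ.prod PI) = ∫⁻ w, g w ∂((QJ.prod PI).map Prod.swap) := by
        rw [lintegral_map hgm measurable_swap]
        rfl
      rw [this, Measure.prod_swap, lintegral_indicator_const hS]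
    calc ENNReal.ofReal D = ENNReal.ofReal C' * ENNReal.ofReal θ := by
          rw [← ENNReal.ofReal_mul hC'pos.le]
          congr 1
          rw [hθdef]
          field_simp
      _ ≤ ENNReal.ofReal C' * (PI.prod QJ) S := mul_le_mul_right hprodS _
      _ = ∫⁻ w, g (w.2, w.1) ∂(QJ.prod PI) := step3.symm
      _ ≤ ∫⁻ w, W w.2 w.1 ∂(QJ.prod PI) := step2
      _ = A := step1.symm
  -- master inequality
  have master : ∀ m : ℕ,
      α ^ m * (β ^ m * (ENNReal.ofReal D) ^ (m * m)) ≤ (ENNReal.ofReal C) ^ (m * m) := by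
    intro m
    have hhom := h (m + m) (bip m)
    rw [bip_edgeCount] at hhom
    refine le_trans ?_ hhom
    -- measures
    set Pm : Measure (Fin m → ℝ) := Measure.pi (fun _ => PI) with hPmdef
    set Qm : Measure (Fin m → ℝ) := Measure.pi (fun _ => QJ) with hQmdef
    set G : (Fin (m + m) → ℝ) → ℝ≥0∞ :=
      fun x => ∏ p : Fin m × Fin m, W (x (Fin.castAdd m p.1)) (x (Fin.natAdd m p.2)) with hGdef
    have hGm : Measurable G := Finset.measurable_prod _ fun p _ =>
      hWc (measurable_pi_apply _) (measurable_pi_apply _)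
    have stepA : homDensityL (bip m) κ
        = ∫⁻ x in Set.univ.pi (fun _ : Fin (m + m) => Icc (0:ℝ) 1), G x := by
      rw [homDensityL]
      refine lintegral_congr fun x => ?_
      rw [bip_prod]
      refine Finset.prod_congr rfl fun p _ => ?_
      rw [Sym2.lift_mk]
      show ENNReal.ofReal ((κ (x (Fin.castAdd m p.1)) (x (Fin.natAdd m p.2))
          + κ (x (Fin.natAdd m p.2)) (x (Fin.castAdd m p.1))) / 2)
        = W (x (Fin.castAdd m p.1)) (x (Fin.natAdd m p.2))
      rw [hWdef, hsym (x (Fin.natAdd m p.2)) (x (Fin.castAdd m p.1)), add_self_div_two]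
    -- restrict to the box
    set Ks : Fin (m + m) → Set ℝ := fun i => if (i : ℕ) < m then I else J with hKsdef
    have hKs : ∀ i, MeasurableSet (Ks i) := fun i => by
      by_cases hi : (i : ℕ) < m <;> simp [hKsdef, hi, hI, hJ]
    have hsub : (Set.univ.pi Ks) ⊆ Set.univ.pi (fun _ : Fin (m + m) => Icc (0:ℝ) 1) :=
      Set.pi_mono fun i _ => by
        by_cases hi : (i : ℕ) < m <;> simp [hKsdef, hi, hIsub, hJsub]
    have stepB : ∫⁻ x in Set.univ.pi Ks, G x
        ≤ ∫⁻ x in Set.univ.pi (fun _ : Fin (m + m) => Icc (0:ℝ) 1), G x :=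
      lintegral_mono_set hsub
    -- transport to the product of pi measures
    have hres : (volume : Measure (Fin (m + m) → ℝ)).restrict (Set.univ.pi Ks)
        = Measure.pi (fun i => volume.restrict (Ks i)) := by
      rw [volume_pi, restrict_pi_pi _ _ hKs]
    set E1 : ((Fin m ⊕ Fin m) → ℝ) ≃ᵐ (Fin (m + m) → ℝ) :=
      MeasurableEquiv.piCongrLeft (fun _ => ℝ) finSumFinEquiv with hE1def
    set E2 : ((Fin m ⊕ Fin m) → ℝ) ≃ᵐ ((Fin m → ℝ) × (Fin m → ℝ)) :=
      MeasurableEquiv.sumPiEquivProdPi (fun _ => ℝ) with hE2def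
    set ν : (Fin m ⊕ Fin m) → Measure ℝ :=
      Sum.elim (fun _ : Fin m => volume.restrict I) (fun _ : Fin m => volume.restrict J)
      with hνdef
    haveI hνsf : ∀ i, SigmaFinite (ν i) := fun i => by
      cases i <;> (simp only [hνdef, Sum.elim_inl, Sum.elim_inr]; infer_instance)
    have hfam : (fun a : Fin m ⊕ Fin m => volume.restrict (Ks (finSumFinEquiv a))) = ν := by
      funext a
      cases a with
      | inl a =>
          simp only [hνdef, Sum.elim_inl, hKsdef, finSumFinEquiv_apply_left]
          rw [if_pos (by simpa using a.isLt)]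
      | inr b =>
          simp only [hνdef, Sum.elim_inr, hKsdef, finSumFinEquiv_apply_right]
          rw [if_neg (by simp)]
    have MP1 := measurePreserving_piCongrLeft (fun i : Fin (m + m) => volume.restrict (Ks i))
      finSumFinEquiv
    have MP2 := measurePreserving_sumPiEquivProdPi (X := fun _ : Fin m ⊕ Fin m => ℝ) ν
    have hcoord1 : ∀ (w : (Fin m → ℝ) × (Fin m → ℝ)) (a : Fin m),
        E1 (E2.symm w) (Fin.castAdd m a) = w.1 a := by
      intro w a
      rw [← finSumFinEquiv_apply_left a, hE1def, MeasurableEquiv.piCongrLeft_apply_apply,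
        hE2def]
      simp [MeasurableEquiv.coe_sumPiEquivProdPi_symm, Equiv.sumPiEquivProdPi_symm_apply]
    have hcoord2 : ∀ (w : (Fin m → ℝ) × (Fin m → ℝ)) (b : Fin m),
        E1 (E2.symm w) (Fin.natAdd m b) = w.2 b := by
      intro w b
      rw [← finSumFinEquiv_apply_right b, hE1def, MeasurableEquiv.piCongrLeft_apply_apply,
        hE2def]
      simp [MeasurableEquiv.coe_sumPiEquivProdPi_symm, Equiv.sumPiEquivProdPi_symm_apply]
    have hGval : ∀ w : (Fin m → ℝ) × (Fin m → ℝ),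
        G (E1 (E2.symm w)) = ∏ p : Fin m × Fin m, W (w.1 p.1) (w.2 p.2) := by
      intro w
      rw [hGdef]
      exact Finset.prod_congr rfl fun p _ => by rw [hcoord1, hcoord2]
    have stepC : ∫⁻ x in Set.univ.pi Ks, G x
        = ∫⁻ w, ∏ p : Fin m × Fin m, W (w.1 p.1) (w.2 p.2)
            ∂((Measure.pi fun _ : Fin m => volume.restrict I).prod
              (Measure.pi fun _ : Fin m => volume.restrict J)) := by
      rw [hres]
      calc ∫⁻ x, G x ∂(Measure.pi fun i => volume.restrict (Ks i))
          = ∫⁻ y, G (E1 y) ∂(Measure.pi fun a => volume.restrict (Ks (finSumFinEquiv a))) :=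
            MP1.lintegral_map_equiv G E1
        _ = ∫⁻ y, G (E1 y) ∂(Measure.pi ν) := by rw [hfam]
        _ = ∫⁻ w, G (E1 (E2.symm w))
              ∂((Measure.pi fun i : Fin m => ν (Sum.inl i)).prod
                (Measure.pi fun i : Fin m => ν (Sum.inr i))) := by
            have h2 := MP2.lintegral_map_equiv (fun w => G (E1 (E2.symm w))) E2
            simp only [MeasurableEquiv.symm_apply_apply] at h2
            exact h2.symm
        _ = ∫⁻ w, ∏ p : Fin m × Fin m, W (w.1 p.1) (w.2 p.2)
              ∂((Measure.pi fun _ : Fin m => volume.restrict I).prod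
                (Measure.pi fun _ : Fin m => volume.restrict J)) := by
            simp only [hνdef, Sum.elim_inl, Sum.elim_inr]
            exact lintegral_congr fun w => hGval w
    -- probability pi measures
    haveI : IsProbabilityMeasure Pm := by rw [hPmdef]; infer_instance
    haveI : IsProbabilityMeasure Qm := by rw [hQmdef]; infer_instance
    set T : ℝ≥0∞ :=
      ∫⁻ xv, (∫⁻ yv, ∏ p : Fin m × Fin m, W (xv p.1) (yv p.2) ∂Qm) ∂Pm with hTdef
    have hPms : Measure.pi (fun _ : Fin m => volume.restrict I) = α ^ m • Pm := by
      calc Measure.pi (fun _ : Fin m => volume.restrict I)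
          = Measure.pi (fun _ : Fin m => α • PI) := by simp only [hPIres]
        _ = α ^ m • Pm := by rw [pi_smul α hαtop PI, Fintype.card_fin, hPmdef]
    have hQms : Measure.pi (fun _ : Fin m => volume.restrict J) = β ^ m • Qm := by
      calc Measure.pi (fun _ : Fin m => volume.restrict J)
          = Measure.pi (fun _ : Fin m => β • QJ) := by simp only [hQJres]
        _ = β ^ m • Qm := by rw [pi_smul β hβtop QJ, Fintype.card_fin, hQmdef]
    have hprodmeas : Measurable (fun w : (Fin m → ℝ) × (Fin m → ℝ) =>
        ∏ p : Fin m × Fin m, W (w.1 p.1) (w.2 p.2)) :=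
      Finset.measurable_prod _ fun p _ =>
        hWc ((measurable_pi_apply p.1).comp measurable_fst)
          ((measurable_pi_apply p.2).comp measurable_snd)
    have stepD : ∫⁻ w, ∏ p : Fin m × Fin m, W (w.1 p.1) (w.2 p.2)
            ∂((Measure.pi fun _ : Fin m => volume.restrict I).prod
              (Measure.pi fun _ : Fin m => volume.restrict J))
        = α ^ m * (β ^ m * T) := by
      rw [lintegral_prod _ hprodmeas.aemeasurable, hPms, hQms, lintegral_smul_measure]
      simp only [lintegral_smul_measure, smul_eq_mul]
      rw [lintegral_const_mul' _ _ (ENNReal.pow_ne_top hβtop), hTdef]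
    -- the Jensen chain
    have hWab : Measurable (fun q : (Fin m → ℝ) × ℝ => ∏ a : Fin m, W (q.1 a) q.2) :=
      Finset.measurable_prod _ fun a _ =>
        hWc ((measurable_pi_apply a).comp measurable_fst) measurable_snd
    have hTeq : T = ∫⁻ xv, (∫⁻ t, ∏ a : Fin m, W (xv a) t ∂QJ) ^ m ∂Pm := by
      rw [hTdef]
      refine lintegral_congr fun xv => ?_
      calc ∫⁻ yv, ∏ p : Fin m × Fin m, W (xv p.1) (yv p.2) ∂Qm
          = ∫⁻ yv, ∏ b : Fin m, ∏ a : Fin m, W (xv a) (yv b) ∂Qm := by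
            refine lintegral_congr fun yv => ?_
            rw [Fintype.prod_prod_type, Finset.prod_comm]
        _ = ∏ _b : Fin m, ∫⁻ t, ∏ a : Fin m, W (xv a) t ∂QJ := by
            rw [hQmdef]
            exact lintegral_pi_prod QJ (fun _ t => ∏ a : Fin m, W (xv a) t)
              (fun _ => Finset.measurable_prod _ fun a _ =>
                hWc measurable_const measurable_id)
        _ = (∫⁻ t, ∏ a : Fin m, W (xv a) t ∂QJ) ^ m := by
            rw [Finset.prod_const, Finset.card_univ, Fintype.card_fin]
    have hmeasX : Measurable (fun xv : Fin m → ℝ => ∫⁻ t, ∏ a : Fin m, W (xv a) t ∂QJ) :=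
      hWab.lintegral_prod_right'
    have hJ1 : (∫⁻ xv, ∫⁻ t, ∏ a : Fin m, W (xv a) t ∂QJ ∂Pm) ^ m ≤ T := by
      rw [hTeq]
      exact jensen_pow Pm hmeasX.aemeasurable m
    have hswap : ∫⁻ xv, (∫⁻ t, ∏ a : Fin m, W (xv a) t ∂QJ) ∂Pm
        = ∫⁻ t, (∫⁻ xv, ∏ a : Fin m, W (xv a) t ∂Pm) ∂QJ :=
      lintegral_lintegral_swap hWab.aemeasurable
    have hinner : ∀ t : ℝ, (∫⁻ xv, ∏ a : Fin m, W (xv a) t ∂Pm) = (∫⁻ s, W s t ∂PI) ^ m := by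
      intro t
      rw [hPmdef, lintegral_pi_prod PI (fun _ s => W s t)
        (fun _ => hWc measurable_id measurable_const),
        Finset.prod_const, Finset.card_univ, Fintype.card_fin]
    have hmeasT : Measurable (fun t : ℝ => ∫⁻ s, W s t ∂PI) :=
      (hWm.comp measurable_swap).lintegral_prod_right'
    have hJ2 : A ^ m ≤ ∫⁻ t, (∫⁻ s, W s t ∂PI) ^ m ∂QJ := by
      rw [hAdef]
      exact jensen_pow QJ hmeasT.aemeasurable m
    have hchain : A ^ (m * m) ≤ T := by
      calc A ^ (m * m) = (A ^ m) ^ m := by rw [pow_mul]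
        _ ≤ (∫⁻ t, (∫⁻ s, W s t ∂PI) ^ m ∂QJ) ^ m := pow_le_pow_left₀ zero_le hJ2 m
        _ = (∫⁻ t, (∫⁻ xv, ∏ a : Fin m, W (xv a) t ∂Pm) ∂QJ) ^ m := by
            congr 1
            exact lintegral_congr fun t => (hinner t).symm
        _ = (∫⁻ xv, (∫⁻ t, ∏ a : Fin m, W (xv a) t ∂QJ) ∂Pm) ^ m := by rw [hswap]
        _ ≤ T := hJ1
    have hT : (ENNReal.ofReal D) ^ (m * m) ≤ T :=
      le_trans (pow_le_pow_left₀ zero_le hAD (m * m)) hchain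
    calc α ^ m * (β ^ m * (ENNReal.ofReal D) ^ (m * m))
        ≤ α ^ m * (β ^ m * T) := mul_le_mul_right (mul_le_mul_right hT _) _
      _ = ∫⁻ w, ∏ p : Fin m × Fin m, W (w.1 p.1) (w.2 p.2)
            ∂((Measure.pi fun _ : Fin m => volume.restrict I).prod
              (Measure.pi fun _ : Fin m => volume.restrict J)) := stepD.symm
      _ = ∫⁻ x in Set.univ.pi Ks, G x := stepC.symm
      _ ≤ ∫⁻ x in Set.univ.pi (fun _ : Fin (m + m) => Icc (0:ℝ) 1), G x := stepB
      _ = homDensityL (bip m) κ := stepA.symm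
  -- numeric contradiction
  set a : ℝ := α.toReal with hadef
  set b : ℝ := β.toReal with hbdef
  have ha : 0 < a := ENNReal.toReal_pos hα0 hαtop
  have hb : 0 < b := ENNReal.toReal_pos hβ0 hβtop
  have hαa : α = ENNReal.ofReal a := (ENNReal.ofReal_toReal hαtop).symm
  have hβb : β = ENNReal.ofReal b := (ENNReal.ofReal_toReal hβtop).symm
  have hreal : ∀ m : ℕ, a ^ m * (b ^ m * D ^ (m * m)) ≤ C ^ (m * m) := by
    intro m
    have hm := master m
    rw [hαa, hβb, ← ENNReal.ofReal_pow ha.le, ← ENNReal.ofReal_pow hb.le,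
      ← ENNReal.ofReal_pow hDpos.le, ← ENNReal.ofReal_mul (by positivity),
      ← ENNReal.ofReal_mul (by positivity), ← ENNReal.ofReal_pow hC] at hm
    exact (ENNReal.ofReal_le_ofReal_iff (by positivity)).1 hm
  rcases eq_or_lt_of_le hC with hC0 | hCpos
  · have h1 := hreal 1
    rw [← hC0] at h1
    norm_num at h1
    nlinarith [mul_pos ha (mul_pos hb hDpos)]
  · set ρ : ℝ := D / C with hρdef
    have hρ1 : 1 < ρ := (one_lt_div hCpos).2 hCD
    obtain ⟨n0, hn0⟩ := pow_unbounded_of_one_lt ((a * b)⁻¹) hρ1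
    set m : ℕ := n0 + 1 with hmdef
    have habpos : (0:ℝ) < a * b := by positivity
    have hmono : ρ ^ n0 ≤ ρ ^ m := pow_le_pow_right₀ hρ1.le (by omega)
    have hab1 : 1 < (a * b) * ρ ^ m := by
      calc (1:ℝ) = (a * b) * (a * b)⁻¹ := (mul_inv_cancel₀ habpos.ne').symm
        _ < (a * b) * ρ ^ m := by
            exact mul_lt_mul_of_pos_left (lt_of_lt_of_le hn0 hmono) habpos
    have hDval : D = C * ρ := by
      rw [hρdef]
      field_simp
    have hcontr := hreal m
    have hEq : a ^ m * (b ^ m * D ^ (m * m)) = ((a * b) * ρ ^ m) ^ m * C ^ (m * m) := by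
      rw [hDval]
      ring
    rw [hEq] at hcontr
    have hgt1 : 1 < ((a * b) * ρ ^ m) ^ m := one_lt_pow₀ hab1 (by omega)
    nlinarith [pow_pos hCpos (m * m), hcontr, hgt1]

end BKaux

end

/-- A kernel `κ` satisfies `s(F,κ) ≤ C^{e(F)}` for every finite simple
graph `F` if and only if `κ ≤ C` almost everywhere on `[0,1]²`. -/
theorem bounded_kernel_iff_bounded_counts (κ : ℝ → ℝ → ℝ) (hκ : IsKernel κ)
    (C : ℝ) (hC : 0 ≤ C) :
    (∀ (k : ℕ) (F : SimpleGraph (Fin k)), homDensityL F κ ≤ ENNReal.ofReal C ^ edgeCount F) ↔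
      ∀ᵐ q ∂(volume.restrict (Icc (0:ℝ) 1 ×ˢ Icc (0:ℝ) 1)), κ q.1 q.2 ≤ C := by
  constructor
  · exact fun h => BKaux.hard_dir κ hκ C hC h
  · exact fun hae k F => BKaux.easy_dir κ hκ C hae k F
end

section
/- Let p : ℕ → (0,1] satisfy p(n)·n^{1/2} → ∞, and let (G_n) be a sequence of graphs with |G_n| = n such that t_p(K₂,G_n) → 1 and t_p(C₄,G_n) → 1 as n → ∞. Then t_p(C_k,G_n) → 1 as n → ∞ for each fixed k ≥ 5, where C_k denotes the cycle of length k. -/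
open MeasureTheory Set Filter
open scoped ENNReal Classical

section CycleAux

open Matrix

variable {V : Type*} [Fintype V] [DecidableEq V]

variable {V : Type*} [Fintype V] [DecidableEq V]

lemma pow_apply_eq (A : Matrix V V ℝ) (m : ℕ) (u v : V) :
    (A ^ m) u v = ∑ g : Fin (m+1) → V,
      (if g 0 = u ∧ g (Fin.last m) = v then ∏ i : Fin m, A (g i.castSucc) (g i.succ) else 0) := by
  induction m generalizing v with
  | zero =>
    rw [pow_zero, ← Equiv.sum_comp (Equiv.funUnique (Fin 1) V).symm]
    have hre : ∀ (x : V) (i : Fin 1), ((Equiv.funUnique (Fin 1) V).symm x) i = x :=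
      fun _ _ => rfl
    simp only [hre, Finset.univ_eq_empty, Finset.prod_empty, Matrix.one_apply]
    rcases eq_or_ne u v with h | h
    · subst h
      simp
    · rw [if_neg h, Finset.sum_eq_zero]
      rintro x -
      rw [if_neg]
      rintro ⟨rfl, rfl⟩
      exact h rfl
  | succ m ih =>
    rw [pow_succ, Matrix.mul_apply]
    rw [← Equiv.sum_comp (Fin.snocEquiv (fun _ => V)), Fintype.sum_prod_type]
    have key : ∀ (w : V) (g : Fin (m+1) → V),
        (if (Fin.snoc g w : Fin (m+2) → V) 0 = u ∧ (Fin.snoc g w : Fin (m+2) → V) (Fin.last (m+1)) = v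
          then ∏ i : Fin (m+1), A ((Fin.snoc g w : Fin (m+2) → V) i.castSucc)
            ((Fin.snoc g w : Fin (m+2) → V) i.succ) else 0)
        = (if g 0 = u then ∏ i : Fin m, A (g i.castSucc) (g i.succ) else 0)
            * (if w = v then A (g (Fin.last m)) w else 0) := by
      intro w g
      have h0 : (Fin.snoc g w : Fin (m+2) → V) 0 = g 0 := by
        rw [show (0 : Fin (m+2)) = Fin.castSucc 0 by rfl, Fin.snoc_castSucc]
      have hlast : (Fin.snoc g w : Fin (m+2) → V) (Fin.last (m+1)) = w := Fin.snoc_last _ _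
      have hprod : ∏ i : Fin (m+1), A ((Fin.snoc g w : Fin (m+2) → V) i.castSucc)
            ((Fin.snoc g w : Fin (m+2) → V) i.succ)
          = (∏ i : Fin m, A (g i.castSucc) (g i.succ)) * A (g (Fin.last m)) w := by
        rw [Fin.prod_univ_castSucc]
        congr 1
        · refine Finset.prod_congr rfl fun i _ => ?_
          rw [show (i.castSucc.succ : Fin (m+2)) = i.succ.castSucc from rfl,
            Fin.snoc_castSucc, Fin.snoc_castSucc]
        · rw [show ((Fin.last m).castSucc : Fin (m+2)) = Fin.castSucc (Fin.last m) from rfl,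
            Fin.snoc_castSucc, Fin.succ_last, Fin.snoc_last]
      rw [h0, hlast, hprod]
      by_cases h1 : g 0 = u <;> by_cases h2 : w = v <;> simp [h1, h2]
    calc ∑ w, (A ^ m) u w * A w v
        = ∑ w, (∑ g : Fin (m+1) → V, if g 0 = u ∧ g (Fin.last m) = w then
            ∏ i : Fin m, A (g i.castSucc) (g i.succ) else 0) * A w v := by
          simp_rw [ih]
      _ = ∑ w, ∑ g : Fin (m+1) → V, (if g 0 = u ∧ g (Fin.last m) = w then
            ∏ i : Fin m, A (g i.castSucc) (g i.succ) else 0) * A w v := by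
          simp_rw [Finset.sum_mul]
      _ = ∑ g : Fin (m+1) → V, ∑ w, (if g 0 = u ∧ g (Fin.last m) = w then
            ∏ i : Fin m, A (g i.castSucc) (g i.succ) else 0) * A w v := Finset.sum_comm
      _ = ∑ g : Fin (m+1) → V, (if g 0 = u then ∏ i : Fin m, A (g i.castSucc) (g i.succ) else 0)
            * A (g (Fin.last m)) v := by
          refine Finset.sum_congr rfl fun g _ => ?_
          rw [Finset.sum_eq_single (g (Fin.last m))]
          · by_cases h1 : g 0 = u <;> simp [h1]
          · intro w _ hw
            rw [if_neg (by tauto), zero_mul]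
          · simp
      _ = ∑ w, ∑ g : Fin (m+1) → V, (if g 0 = u then ∏ i : Fin m, A (g i.castSucc) (g i.succ) else 0)
            * (if w = v then A (g (Fin.last m)) w else 0) := by
          rw [Finset.sum_comm]
          refine Finset.sum_congr rfl fun g _ => ?_
          rw [Finset.sum_eq_single v]
          · simp
          · intro b _ hb; simp [hb]
          · simp
      _ = _ := by
          refine Finset.sum_congr rfl fun w _ => Finset.sum_congr rfl fun g _ => ?_
          rw [← key w g]
          rfl

lemma trace_pow_eq (A : Matrix V V ℝ) (m : ℕ) :
    Matrix.trace (A ^ (m+1)) = ∑ g : Fin (m+1) → V, ∏ i : Fin (m+1), A (g i) (g (i + 1)) := by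
  rw [Matrix.trace]
  have h1 : ∀ u : V, (A ^ (m+1)).diag u = ∑ f : Fin (m+2) → V,
      (if f 0 = u ∧ f (Fin.last (m+1)) = u then ∏ i : Fin (m+1), A (f i.castSucc) (f i.succ)
        else 0) := fun u => pow_apply_eq A (m+1) u u
  simp_rw [h1]
  rw [Finset.sum_comm]
  have h2 : ∀ f : Fin (m+2) → V, (∑ u : V, if f 0 = u ∧ f (Fin.last (m+1)) = u then
      ∏ i : Fin (m+1), A (f i.castSucc) (f i.succ) else 0)
      = if f 0 = f (Fin.last (m+1)) then ∏ i : Fin (m+1), A (f i.castSucc) (f i.succ) else 0 := by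
    intro f
    rw [Finset.sum_eq_single (f 0)]
    · by_cases h : f 0 = f (Fin.last (m+1)) <;> simp [eq_comm, h]
    · intro b _ hb
      rw [if_neg]
      rintro ⟨rfl, -⟩
      exact hb rfl
    · simp
  simp_rw [h2]
  rw [← Finset.sum_filter]
  refine (Finset.sum_nbij' (fun f => f ∘ Fin.castSucc) (fun g => Fin.snoc g (g 0)) ?_ ?_ ?_ ?_ ?_).symm.symm
  · intro f _; exact Finset.mem_univ _
  · intro g _
    simp only [Finset.mem_filter, Finset.mem_univ, true_and]
    rw [show (0 : Fin (m+2)) = Fin.castSucc 0 from rfl, Fin.snoc_castSucc, Fin.snoc_last]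
  · intro f hf
    simp only [Finset.mem_filter, Finset.mem_univ, true_and] at hf
    dsimp only [Function.comp_apply]
    funext x
    refine Fin.lastCases ?_ (fun j => ?_) x
    · rw [Fin.snoc_last, show (Fin.castSucc 0 : Fin (m+2)) = 0 from rfl]
      exact hf
    · rw [Fin.snoc_castSucc, Function.comp_apply]
  · intro g _
    funext j
    rw [Function.comp_apply, Fin.snoc_castSucc]
  · intro f hf
    simp only [Finset.mem_filter, Finset.mem_univ, true_and] at hf
    dsimp only [Function.comp_apply]
    refine Finset.prod_congr rfl fun i _ => ?_
    congr 1
    refine Fin.lastCases ?_ (fun j => ?_) i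
    · rw [Fin.succ_last, Fin.last_add_one, show Fin.castSucc (0 : Fin (m+1)) = 0 from rfl]
      exact hf.symm
    · rw [show (j.castSucc.succ : Fin (m+2)) = j.succ.castSucc from rfl,
        Fin.coeSucc_eq_succ]

lemma trace_adj_pow (G : SimpleGraph V) [DecidableRel G.Adj] (m : ℕ) :
    Matrix.trace ((SimpleGraph.adjMatrix ℝ G) ^ (m+1)) =
      ((Finset.univ.filter fun g : Fin (m+1) → V => ∀ i, G.Adj (g i) (g (i+1))).card : ℝ) := by
  rw [trace_pow_eq]
  simp only [SimpleGraph.adjMatrix_apply, Finset.prod_boole, Finset.sum_boole, Finset.mem_univ,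
    forall_const]

lemma homCount_cycle (G : SimpleGraph V) [DecidableRel G.Adj] (m : ℕ) :
    homCount (SimpleGraph.cycleGraph (m+2)) G =
      (Finset.univ.filter fun g : Fin (m+2) → V => ∀ i, G.Adj (g i) (g (i+1))).card := by
  have e : (SimpleGraph.cycleGraph (m+2) →g G) ≃
      {g : Fin (m+2) → V // ∀ i, G.Adj (g i) (g (i+1))} :=
    ⟨fun φ => ⟨φ, fun i => φ.map_rel (by
        rw [SimpleGraph.cycleGraph_adj]
        right
        abel)⟩,
     fun g => ⟨g.1, by
        intro a b hab
        rw [SimpleGraph.cycleGraph_adj] at hab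
        rcases hab with h | h
        · have hab : a = b + 1 := by rw [← h]; abel
          rw [hab]
          exact (g.2 b).symm
        · have hab : b = a + 1 := by rw [← h]; abel
          rw [hab]
          exact g.2 a⟩,
     fun φ => rfl, fun g => rfl⟩
  rw [homCount, Nat.card_congr e, Nat.card_eq_fintype_card, Fintype.card_subtype]

section spec
variable {ι : Type*} [Fintype ι] [DecidableEq ι] {A : Matrix ι ι ℝ}

lemma conj_pow_eq (hA : A.IsHermitian) (m : ℕ) :
    A ^ m = (hA.eigenvectorUnitary : Matrix ι ι ℝ) *
      (Matrix.diagonal (RCLike.ofReal ∘ hA.eigenvalues)) ^ m *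
      star (hA.eigenvectorUnitary : Matrix ι ι ℝ) := by
  set U := (hA.eigenvectorUnitary : Matrix ι ι ℝ) with hUdef
  set D : Matrix ι ι ℝ := Matrix.diagonal (RCLike.ofReal ∘ hA.eigenvalues) with hDdef
  have hU1 : U * star U = 1 := (Matrix.mem_unitaryGroup_iff).mp hA.eigenvectorUnitary.2
  have hU2 : star U * U = 1 := (Matrix.mem_unitaryGroup_iff').mp hA.eigenvectorUnitary.2
  induction m with
  | zero => rw [pow_zero, pow_zero, Matrix.mul_one, hU1]
  | succ m ih =>
    rw [pow_succ, ih]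
    nth_rewrite 1 [hA.spectral_theorem]
    simp only [Unitary.conjStarAlgAut_apply, Unitary.coe_star]
    rw [pow_succ]
    simp only [Matrix.mul_assoc]
    congr 2
    rw [← Matrix.mul_assoc (star U) U, hU2, Matrix.one_mul]

lemma trace_pow_eq_sum_eig (hA : A.IsHermitian) (m : ℕ) :
    (A ^ m).trace = ∑ i, hA.eigenvalues i ^ m := by
  rw [conj_pow_eq hA m, Matrix.trace_mul_comm, ← Matrix.mul_assoc,
    (Matrix.mem_unitaryGroup_iff').mp hA.eigenvectorUnitary.2, Matrix.one_mul,
    Matrix.diagonal_pow, Matrix.trace_diagonal]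
  simp

lemma quad_form_le_aux (A U : Matrix ι ι ℝ) (lam : ι → ℝ) (c : ℝ)
    (hU1 : U * star U = 1)
    (hAeq : A = U * Matrix.diagonal lam * star U) (hc : ∀ i, lam i ≤ c) :
    ∑ u, ∑ v, A u v ≤ c * (Fintype.card ι) := by
  classical
  subst hAeq
  have hUt : star U = Uᵀ := by
    rw [Matrix.star_eq_conjTranspose, Matrix.conjTranspose_eq_transpose_of_trivial]
  set x : ι → ℝ := fun _ => 1 with hx
  set y : ι → ℝ := x ᵥ* U with hy
  have hq : ∑ u, ∑ v, (U * Matrix.diagonal lam * star U) u v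
      = ∑ i, lam i * (y i)^2 := by
    have h1 : ∑ u, ∑ v, (U * Matrix.diagonal lam * star U) u v
        = dotProduct x ((U * Matrix.diagonal lam * star U) *ᵥ x) := by
      simp [dotProduct, Matrix.mulVec, hx]
    rw [h1, Matrix.dotProduct_mulVec, ← Matrix.vecMul_vecMul, ← Matrix.vecMul_vecMul,
      ← hy, ← Matrix.dotProduct_mulVec, hUt, Matrix.mulVec_transpose, ← hy]
    simp only [dotProduct, Matrix.vecMul_diagonal]
    refine Finset.sum_congr rfl fun i _ => by ring
  have hyy : ∑ i, (y i)^2 = (Fintype.card ι : ℝ) := by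
    have h2 : ∑ i, (y i)^2 = dotProduct y y := by
      simp [dotProduct, sq]
    rw [h2]
    nth_rewrite 1 [hy]
    rw [← Matrix.dotProduct_mulVec, hy, ← Matrix.mulVec_transpose, Matrix.mulVec_mulVec,
      ← hUt, hU1, Matrix.one_mulVec]
    simp [dotProduct, hx]
  rw [hq]
  calc ∑ i, lam i * (y i)^2 ≤ ∑ i, c * (y i)^2 :=
        Finset.sum_le_sum fun i _ => mul_le_mul_of_nonneg_right (hc i) (sq_nonneg _)
    _ = c * (Fintype.card ι) := by rw [← Finset.mul_sum, hyy]

lemma quad_form_le {A : Matrix ι ι ℝ} (hA : A.IsHermitian) (c : ℝ)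
    (hc : ∀ i, hA.eigenvalues i ≤ c) :
    ∑ u, ∑ v, A u v ≤ c * (Fintype.card ι) := by
  refine quad_form_le_aux A (hA.eigenvectorUnitary : Matrix ι ι ℝ) hA.eigenvalues c
    ((Matrix.mem_unitaryGroup_iff).mp hA.eigenvectorUnitary.2) ?_ hc
  have := conj_pow_eq hA 1
  rwa [pow_one, pow_one] at this
end spec

lemma homCount_eq_trace (G : SimpleGraph V) [DecidableRel G.Adj] (m : ℕ) :
    ((homCount (SimpleGraph.cycleGraph (m+2)) G : ℝ)) =
      Matrix.trace ((SimpleGraph.adjMatrix ℝ G) ^ (m+2)) := by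
  rw [homCount_cycle]
  exact (trace_adj_pow G (m+1)).symm

lemma trace_sq_eq (G : SimpleGraph V) [DecidableRel G.Adj] :
    Matrix.trace ((SimpleGraph.adjMatrix ℝ G) ^ 2) =
      ∑ u, ∑ v, (SimpleGraph.adjMatrix ℝ G) u v := by
  rw [pow_two, Matrix.trace]
  simp only [Matrix.diag_apply, Matrix.mul_apply, SimpleGraph.adjMatrix_apply]
  refine Finset.sum_congr rfl fun u _ => Finset.sum_congr rfl fun v _ => ?_
  by_cases h : G.Adj u v
  · simp [h, h.symm]
  · simp [h]

lemma key_lemma (n : ℕ) (hn : 0 < n) (H : SimpleGraph (Fin n)) [DecidableRel H.Adj] :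
    ∃ L : ℝ, 0 ≤ L ∧
      ((homCount (SimpleGraph.cycleGraph 2) H : ℝ)) ≤ L * n ∧
      L ^ 4 ≤ (homCount (SimpleGraph.cycleGraph 4) H : ℝ) ∧
      ∀ k : ℕ, 4 ≤ k →
        |(homCount (SimpleGraph.cycleGraph k) H : ℝ) - L ^ k| ^ 4
          ≤ ((homCount (SimpleGraph.cycleGraph 4) H : ℝ) - L ^ 4) ^ k := by
  classical
  set A : Matrix (Fin n) (Fin n) ℝ := SimpleGraph.adjMatrix ℝ H with hAdef
  have hA : A.IsHermitian := (H.isSymm_adjMatrix : (SimpleGraph.adjMatrix ℝ H).IsSymm)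
  set lam : Fin n → ℝ := hA.eigenvalues with hlam
  have hTk : ∀ m : ℕ, (homCount (SimpleGraph.cycleGraph (m+2)) H : ℝ)
      = ∑ i, lam i ^ (m+2) := fun m => by
    rw [homCount_eq_trace, ← hAdef, trace_pow_eq_sum_eig hA]
  obtain ⟨i0, -, hi0⟩ := Finset.exists_max_image Finset.univ lam ⟨⟨0, hn⟩, Finset.mem_univ _⟩
  set L := lam i0 with hL
  have hpow4 : ∀ i : Fin n, 0 ≤ lam i ^ 4 := fun i => by positivity
  have hhom2 : (homCount (SimpleGraph.cycleGraph 2) H : ℝ) ≤ L * n := by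
    have h1 : (homCount (SimpleGraph.cycleGraph 2) H : ℝ) = ∑ u, ∑ v, A u v := by
      rw [show (2 : ℕ) = 0 + 2 from rfl, homCount_eq_trace, ← hAdef, ← trace_sq_eq, hAdef]
    rw [h1]
    have := quad_form_le hA L (fun i => hi0 i (Finset.mem_univ i))
    simpa using this
  have hL0 : 0 ≤ L := by
    have h2 : (0 : ℝ) ≤ (homCount (SimpleGraph.cycleGraph 2) H : ℝ) := Nat.cast_nonneg _
    nlinarith [h2, hhom2, (Nat.cast_pos (α := ℝ)).mpr hn]
  have hQ : ∀ m : ℕ, (homCount (SimpleGraph.cycleGraph (m+2)) H : ℝ) - L ^ (m+2)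
      = ∑ i ∈ Finset.univ.erase i0, lam i ^ (m+2) := by
    intro m
    rw [hTk m, ← Finset.add_sum_erase _ _ (Finset.mem_univ i0), hL]
    ring
  have hL4 : L ^ 4 ≤ (homCount (SimpleGraph.cycleGraph 4) H : ℝ) := by
    rw [show (4 : ℕ) = 2 + 2 from rfl, hTk 2]
    exact Finset.single_le_sum (fun i _ => hpow4 i) (Finset.mem_univ i0)
  refine ⟨L, hL0, hhom2, hL4, ?_⟩
  intro k hk
  obtain ⟨m, rfl⟩ : ∃ m, k = m + 2 := ⟨k - 2, by omega⟩
  set Q : ℝ := (homCount (SimpleGraph.cycleGraph 4) H : ℝ) - L ^ 4 with hQdef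
  have hQ4 : Q = ∑ i ∈ Finset.univ.erase i0, lam i ^ 4 := hQ 2
  have hQ0 : 0 ≤ Q := by
    rw [hQ4]; exact Finset.sum_nonneg fun i _ => hpow4 i
  rw [hQ m]
  rcases Finset.eq_empty_or_nonempty (Finset.univ.erase i0) with he | he
  · rw [he]
    simp only [Finset.sum_empty, abs_zero]
    rw [show (0:ℝ)^4 = 0 by norm_num]
    positivity
  obtain ⟨j, hj, hjmax⟩ := Finset.exists_max_image _ (fun i => |lam i|) he
  set s := |lam j| with hs
  have hs0 : 0 ≤ s := abs_nonneg _
  have habs4 : ∀ i : Fin n, |lam i| ^ 4 = lam i ^ 4 := fun i => by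
    rw [pow_abs, abs_of_nonneg (hpow4 i)]
  have hs4 : s ^ 4 ≤ Q := by
    rw [hQ4, hs, habs4 j]
    exact Finset.single_le_sum (fun i _ => hpow4 i) hj
  set S : ℝ := ∑ i ∈ Finset.univ.erase i0, |lam i| ^ (m+2) with hS
  have h1 : |∑ i ∈ Finset.univ.erase i0, lam i ^ (m+2)| ≤ S := by
    rw [hS]
    refine (Finset.abs_sum_le_sum_abs _ _).trans ?_
    refine Finset.sum_le_sum fun i _ => ?_
    rw [pow_abs]
  have h2 : S ≤ s ^ (m + 2 - 4) * Q := by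
    rw [hS, hQ4, Finset.mul_sum]
    refine Finset.sum_le_sum fun i hi => ?_
    have : |lam i| ^ (m+2) = |lam i| ^ (m + 2 - 4) * |lam i| ^ 4 := by
      rw [← pow_add]
      congr 1
      omega
    rw [this, habs4 i]
    refine mul_le_mul_of_nonneg_right ?_ (hpow4 i)
    exact pow_le_pow_left₀ (abs_nonneg _) (hjmax i hi) _
  have h3 : |∑ i ∈ Finset.univ.erase i0, lam i ^ (m+2)| ^ 4 ≤ (s ^ (m+2-4) * Q)^4 :=
    pow_le_pow_left₀ (abs_nonneg _) (h1.trans h2) 4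
  refine h3.trans ?_
  have h4 : (s ^ (m+2-4) * Q)^4 = (s^4) ^ (m+2-4) * Q^4 := by
    rw [mul_pow, ← pow_mul, ← pow_mul, Nat.mul_comm]
  rw [h4]
  calc (s^4) ^ (m+2-4) * Q^4 ≤ Q ^ (m+2-4) * Q^4 := by
        refine mul_le_mul_of_nonneg_right ?_ (by positivity)
        exact pow_le_pow_left₀ (by positivity) hs4 _
    _ = Q ^ (m+2) := by rw [← pow_add]; congr 1; omega

lemma edgeCount_eq (F : SimpleGraph V) [DecidableRel F.Adj] : edgeCount F = F.edgeFinset.card := by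
  rw [edgeCount, Nat.card_eq_fintype_card, SimpleGraph.edgeFinset_card]

lemma edgeCount_top2 : edgeCount (⊤ : SimpleGraph (Fin 2)) = 1 := by
  rw [edgeCount_eq]
  decide

lemma edgeCount_cycle (m : ℕ) : edgeCount (SimpleGraph.cycleGraph (m+3)) = m + 3 := by
  have h := SimpleGraph.sum_degrees_eq_twice_card_edges (SimpleGraph.cycleGraph (m+3))
  rw [Finset.sum_congr rfl fun v _ => SimpleGraph.cycleGraph_degree_three_le (v := v)] at h
  rw [Finset.sum_const, Finset.card_univ, Fintype.card_fin, smul_eq_mul] at h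
  rw [edgeCount_eq]
  omega

lemma tendsto_of_pow_four {f : ℕ → ℝ} {c : ℝ} (hc : 0 ≤ c) (h0 : ∀ᶠ n in Filter.atTop, 0 ≤ f n)
    (h : Filter.Tendsto (fun n => f n ^ 4) Filter.atTop (nhds (c ^ 4))) :
    Filter.Tendsto f Filter.atTop (nhds c) := by
  have hcont : ContinuousAt (fun x : ℝ => x ^ ((4:ℝ)⁻¹)) (c ^ 4) :=
    Real.continuousAt_rpow_const _ _ (Or.inr (by norm_num))
  have h2 := hcont.tendsto.comp h
  have hroot : ∀ t : ℝ, 0 ≤ t → (t ^ 4) ^ ((4:ℝ)⁻¹) = t := by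
    intro t ht
    rw [← Real.rpow_natCast t 4, ← Real.rpow_mul ht]
    norm_num
  rw [Function.comp_def] at h2
  rw [show ((c:ℝ)^4) ^ ((4:ℝ)⁻¹) = c from hroot c hc] at h2
  refine h2.congr' ?_
  filter_upwards [h0] with n hn
  exact hroot _ hn

end CycleAux

/-- If `p(n)·√n → ∞` and `t_p(K₂,G_n) → 1`, `t_p(C₄,G_n) → 1`, then
`t_p(C_k,G_n) → 1` for each fixed `k ≥ 5`. -/
theorem cycle_counts_from_K2_C4 (p : ℕ → ℝ) (hp : ∀ n, p n ∈ Ioc (0:ℝ) 1)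
    (hpn : Tendsto (fun n => p n * Real.sqrt n) atTop atTop)
    (G : ∀ n, SimpleGraph (Fin n))
    (hK2 : Tendsto (fun n => tDen (p n) (⊤ : SimpleGraph (Fin 2)) (G n)) atTop (nhds 1))
    (hC4 : Tendsto (fun n => tDen (p n) (SimpleGraph.cycleGraph 4) (G n)) atTop (nhds 1)) :
    ∀ k : ℕ, 5 ≤ k →
      Tendsto (fun n => tDen (p n) (SimpleGraph.cycleGraph k) (G n)) atTop (nhds 1) := by
  classical
  intro k hk
  have hp0 : ∀ n, 0 < p n := fun n => (hp n).1
  set t2 : ℕ → ℝ := fun n => tDen (p n) (⊤ : SimpleGraph (Fin 2)) (G n) with ht2def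
  set t4 : ℕ → ℝ := fun n => tDen (p n) (SimpleGraph.cycleGraph 4) (G n) with ht4def
  set tk : ℕ → ℝ := fun n => tDen (p n) (SimpleGraph.cycleGraph k) (G n) with htkdef
  have ht2 : ∀ n, t2 n = (homCount (SimpleGraph.cycleGraph 2) (G n) : ℝ) / (p n * (n:ℝ)^2) := by
    intro n
    rw [ht2def]
    simp only
    rw [tDen, edgeCount_top2, pow_one, Fintype.card_fin, Fintype.card_fin,
      SimpleGraph.cycleGraph_two_eq_top]
  have hec4 : edgeCount (SimpleGraph.cycleGraph 4) = 4 := edgeCount_cycle 1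
  have ht4 : ∀ n, t4 n = (homCount (SimpleGraph.cycleGraph 4) (G n) : ℝ)
      / ((p n * n)^4) := by
    intro n
    rw [ht4def]
    simp only
    rw [tDen, hec4, Fintype.card_fin, Fintype.card_fin, mul_pow]
  have heck : edgeCount (SimpleGraph.cycleGraph k) = k := by
    obtain ⟨m, rfl⟩ : ∃ m, k = m + 3 := ⟨k - 3, by omega⟩
    exact edgeCount_cycle m
  have htk : ∀ n, tk n = (homCount (SimpleGraph.cycleGraph k) (G n) : ℝ)
      / ((p n * n)^k) := by
    intro n
    rw [htkdef]
    simp only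
    rw [tDen, heck, Fintype.card_fin, Fintype.card_fin, mul_pow]
  set L : ℕ → ℝ := fun n => if h : 0 < n then (key_lemma n h (G n)).choose else 0 with hLdef
  have hLspec : ∀ n, 0 < n → 0 ≤ L n ∧
      ((homCount (SimpleGraph.cycleGraph 2) (G n) : ℝ)) ≤ L n * n ∧
      L n ^ 4 ≤ (homCount (SimpleGraph.cycleGraph 4) (G n) : ℝ) ∧
      ∀ j : ℕ, 4 ≤ j →
        |(homCount (SimpleGraph.cycleGraph j) (G n) : ℝ) - L n ^ j| ^ 4
          ≤ ((homCount (SimpleGraph.cycleGraph 4) (G n) : ℝ) - L n ^ 4) ^ j := by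
    intro n hn
    have : L n = (key_lemma n hn (G n)).choose := by rw [hLdef]; exact dif_pos hn
    rw [this]
    exact (key_lemma n hn (G n)).choose_spec
  set a : ℕ → ℝ := fun n => L n / (p n * n) with hadef
  have hfacts : ∀ᶠ n in atTop, 0 ≤ a n ∧ 0 ≤ t2 n ∧ t2 n ≤ a n ∧ a n ^ 4 ≤ t4 n ∧
      |tk n - a n ^ k| ^ 4 ≤ (t4 n - a n ^ 4) ^ k := by
    filter_upwards [eventually_ge_atTop 1] with n hn1
    have hn : 0 < n := hn1
    obtain ⟨hL0, hh2, hh4, hhk⟩ := hLspec n hn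
    have hnR : (0:ℝ) < n := by exact_mod_cast hn
    have hd : (0:ℝ) < p n * n := mul_pos (hp0 n) hnR
    have ha : a n = L n / (p n * n) := rfl
    have hak : ∀ j : ℕ, a n ^ j = L n ^ j / (p n * n) ^ j := fun j => div_pow _ _ _
    refine ⟨div_nonneg hL0 hd.le, ?_, ?_, ?_, ?_⟩
    · rw [ht2 n]
      exact div_nonneg (Nat.cast_nonneg _) (mul_nonneg (hp0 n).le (by positivity))
    · rw [ht2 n, ha]
      have heq : p n * (n:ℝ)^2 = (p n * n) * n := by ring
      rw [heq]
      have h1 : (homCount (SimpleGraph.cycleGraph 2) (G n) : ℝ) / ((p n * n) * n)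
          ≤ (L n * n) / ((p n * n) * n) :=
        div_le_div_of_nonneg_right hh2 (by positivity)
      refine h1.trans_eq ?_
      rw [mul_div_mul_right _ _ (ne_of_gt hnR)]
    · rw [ht4 n, hak 4]
      exact div_le_div_of_nonneg_right hh4 (by positivity)
    · have hdkpos : (0:ℝ) < (p n * n)^k := by positivity
      have h44 : ((p n * n)^k)^4 = ((p n * n)^4)^k := by
        rw [← pow_mul, ← pow_mul, Nat.mul_comm]
      rw [htk n, ht4 n, hak k, hak 4, div_sub_div_same, div_sub_div_same, abs_div,
        abs_of_pos hdkpos, div_pow, div_pow, h44]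
      exact div_le_div_of_nonneg_right (hhk k (by omega)) (by positivity)
  have hE3 : ∀ᶠ n in atTop, 0 ≤ a n := hfacts.mono fun n h => h.1
  have hE5 : ∀ᶠ n in atTop, 0 ≤ t2 n := hfacts.mono fun n h => h.2.1
  have hE1 : ∀ᶠ n in atTop, t2 n ≤ a n := hfacts.mono fun n h => h.2.2.1
  have hE2 : ∀ᶠ n in atTop, a n ^ 4 ≤ t4 n := hfacts.mono fun n h => h.2.2.2.1
  have hE4 : ∀ᶠ n in atTop, |tk n - a n ^ k| ^ 4 ≤ (t4 n - a n ^ 4) ^ k :=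
    hfacts.mono fun n h => h.2.2.2.2
  have ha4 : Tendsto (fun n => a n ^ 4) atTop (nhds 1) := by
    have hlow : Tendsto (fun n => t2 n ^ 4) atTop (nhds 1) := by
      have := hK2.pow 4
      simpa using this
    refine tendsto_of_tendsto_of_tendsto_of_le_of_le' hlow hC4 ?_ hE2
    filter_upwards [hE1, hE5] with n h1 h5
    exact pow_le_pow_left₀ h5 h1 4
  have haT : Tendsto a atTop (nhds 1) := by
    refine tendsto_of_pow_four (by norm_num) hE3 ?_
    simpa using ha4
  have hR : Tendsto (fun n => (t4 n - a n ^ 4) ^ k) atTop (nhds 0) := by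
    have h0 : Tendsto (fun n => t4 n - a n ^ 4) atTop (nhds 0) := by
      have := hC4.sub ha4
      simpa using this
    have := h0.pow k
    simpa [zero_pow (show k ≠ 0 by omega)] using this
  have hE4T : Tendsto (fun n => |tk n - a n ^ k| ^ 4) atTop (nhds 0) := by
    refine tendsto_of_tendsto_of_tendsto_of_le_of_le' tendsto_const_nhds hR ?_ hE4
    exact Eventually.of_forall fun n => by positivity
  have hET : Tendsto (fun n => |tk n - a n ^ k|) atTop (nhds 0) := by
    refine tendsto_of_pow_four le_rfl (Eventually.of_forall fun n => abs_nonneg _) ?_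
    simpa using hE4T
  have hdiff : Tendsto (fun n => tk n - a n ^ k) atTop (nhds 0) :=
    (tendsto_zero_iff_abs_tendsto_zero _).mpr hET
  have hfin : Tendsto (fun n => a n ^ k + (tk n - a n ^ k)) atTop (nhds 1) := by
    have := (haT.pow k).add hdiff
    simpa using this
  refine hfin.congr fun n => by ring
end

section
/- Under the stated assumptions, s_p(K_{s,t},G_n) → 1 as n → ∞ for all integers s,t ≥ 1, where K_{s,t} is the complete bipartite graph with parts of sizes s and t. Moreover, K_{1,s} is flat over the empty graph on s vertices: for every s ≥ 1 and every ε > 0, the number of s-tuples (v_1,…,v_s) ∈ V(G_n)^s whose number of common neighbours in G_n differs from n·p(n)^s by more than ε·n·p(n)^s is at most ε·n^s for all sufficiently large n. -/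
open MeasureTheory Set Filter
open scoped ENNReal Classical

section BipartiteAuxSection
open Finset Filter
open scoped Classical
noncomputable section

namespace BipAux

variable {n : ℕ}

/-- common neighbourhood finset -/
def cnbF (G : SimpleGraph (Fin n)) {a : ℕ} (v : Fin a → Fin n) : Finset (Fin n) :=
  Finset.univ.filter fun w => ∀ i, G.Adj w (v i)

def NW (G : SimpleGraph (Fin n)) (a b : ℕ) : ℕ :=
  ∑ v : Fin a → Fin n, (cnbF G v).card ^ b

def pairSet (G : SimpleGraph (Fin n)) (a b : ℕ) :
    Finset ((Fin a → Fin n) × (Fin b → Fin n)) :=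
  Finset.univ.filter fun q => ∀ j i, G.Adj (q.2 j) (q.1 i)

def ePair (G : SimpleGraph (Fin n)) (a b : ℕ) :
    Finset ((Fin a → Fin n) × (Fin b → Fin n)) :=
  (pairSet G a b).filter fun q => Function.Injective (Sum.elim q.1 q.2)

lemma card_fiber (G : SimpleGraph (Fin n)) {a b : ℕ} (v : Fin a → Fin n) :
    (((pairSet G a b)).filter fun q => q.1 = v).card
      = (Fintype.piFinset fun _ : Fin b => cnbF G v).card := by
  apply Finset.card_nbij (i := fun q => q.2)
  · intro q hq
    simp only [pairSet, Finset.mem_coe, Finset.mem_filter, Finset.mem_univ, true_and] at hq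
    simp only [Finset.mem_coe, Fintype.mem_piFinset, cnbF, Finset.mem_filter, Finset.mem_univ, true_and]
    intro j i
    rw [← hq.2]
    exact hq.1 j i
  · intro q hq q' hq' h
    simp only [Finset.coe_filter, Set.mem_setOf_eq] at hq hq'
    exact Prod.ext (hq.2.trans hq'.2.symm) h
  · intro w hw
    simp only [Fintype.mem_piFinset, cnbF, Finset.mem_filter, Finset.mem_univ, true_and, Finset.mem_coe] at hw
    refine ⟨(v, w), ?_, rfl⟩
    simp only [Finset.mem_coe, Finset.mem_filter, pairSet, Finset.mem_univ, true_and]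
    exact ⟨fun j i => hw j i, trivial⟩

lemma card_pairSet (G : SimpleGraph (Fin n)) (a b : ℕ) :
    (pairSet G a b).card = NW G a b := by
  rw [Finset.card_eq_sum_card_fiberwise (f := fun q => q.1) (t := Finset.univ)
    (fun x _ => Finset.mem_univ _)]
  unfold NW
  refine Finset.sum_congr rfl fun v _ => ?_
  rw [card_fiber, Fintype.card_piFinset]
  simp

lemma mem_pairSet {G : SimpleGraph (Fin n)} {a b : ℕ}
    {q : (Fin a → Fin n) × (Fin b → Fin n)} :
    q ∈ pairSet G a b ↔ ∀ j i, G.Adj (q.2 j) (q.1 i) := by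
  simp [pairSet]

lemma swap_mem_pairSet {G : SimpleGraph (Fin n)} {a b : ℕ}
    {q : (Fin a → Fin n) × (Fin b → Fin n)} (hq : q ∈ pairSet G a b) :
    q.swap ∈ pairSet G b a := by
  rw [mem_pairSet] at hq ⊢
  exact fun j i => (hq i j).symm

lemma card_swap_filter (G : SimpleGraph (Fin n)) (a b : ℕ)
    (P : ((Fin a → Fin n) × (Fin b → Fin n)) → Prop)
    (Q : ((Fin b → Fin n) × (Fin a → Fin n)) → Prop)
    [DecidablePred P] [DecidablePred Q]
    (hPQ : ∀ q, P q ↔ Q q.swap) :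
    ((pairSet G a b).filter P).card
      = ((pairSet G b a).filter Q).card := by
  apply Finset.card_nbij (i := Prod.swap)
  · intro q hq
    simp only [Finset.mem_coe, Finset.mem_filter] at hq ⊢
    exact ⟨swap_mem_pairSet hq.1, by rw [← hPQ]; exact hq.2⟩
  · intro q _ q' _ h
    exact Prod.swap_injective h
  · intro q hq
    simp only [Finset.mem_coe, Finset.mem_filter] at hq
    refine ⟨q.swap, ?_, Prod.swap_swap q⟩
    simp only [Finset.mem_coe, Finset.mem_filter]
    refine ⟨swap_mem_pairSet hq.1, ?_⟩
    rw [hPQ]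
    simpa using hq.2

lemma NW_comm (G : SimpleGraph (Fin n)) (a b : ℕ) : NW G a b = NW G b a := by
  rw [← card_pairSet, ← card_pairSet]
  apply Finset.card_nbij (i := Prod.swap)
  · intro q hq
    exact swap_mem_pairSet hq
  · intro q _ q' _ h
    exact Prod.swap_injective h
  · intro q hq
    exact ⟨q.swap, swap_mem_pairSet hq, Prod.swap_swap q⟩

lemma coin_card (G : SimpleGraph (Fin n)) (a b : ℕ) (i j : Fin b) (hij : i ≠ j) :
    ((pairSet G a b).filter fun q => q.2 i = q.2 j).card ≤ NW G a (b - 1) := by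
  obtain ⟨m, rfl⟩ : ∃ m, b = m + 1 := ⟨b - 1, (Nat.succ_pred_eq_of_pos i.pos).symm⟩
  simp only [Nat.add_sub_cancel]
  rw [Finset.card_eq_sum_card_fiberwise (f := fun q => q.1) (t := Finset.univ)
    (fun x _ => Finset.mem_univ _)]
  unfold NW
  refine Finset.sum_le_sum fun v _ => ?_
  have : ((cnbF G v).card) ^ m = (Fintype.piFinset fun _ : Fin m => cnbF G v).card := by
    rw [Fintype.card_piFinset]; simp
  rw [this]
  apply Finset.card_le_card_of_injOn (f := fun q => q.2 ∘ j.succAbove)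
  · intro q hq
    simp only [Finset.mem_coe, Finset.mem_filter, mem_pairSet] at hq
    obtain ⟨⟨hadj, _⟩, hv⟩ := hq
    simp only [Finset.mem_coe, Fintype.mem_piFinset, Function.comp_apply, cnbF, Finset.mem_filter,
      Finset.mem_univ, true_and]
    intro k i'
    rw [← hv]
    exact hadj _ i'
  · intro q hq q' hq' h
    simp only [Finset.mem_coe, Finset.mem_filter, mem_pairSet] at hq hq'
    have hw : ∀ k, k ≠ j → q.2 k = q'.2 k := by
      intro k hk
      obtain ⟨z, rfl⟩ := Fin.exists_succAbove_eq hk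
      exact congrFun h z
    have hwj : q.2 j = q'.2 j := by
      obtain ⟨z, hz⟩ := Fin.exists_succAbove_eq hij
      rw [← hq.1.2, ← hq'.1.2, ← hz]
      exact congrFun h z
    refine Prod.ext (hq.2.trans hq'.2.symm) (funext fun k => ?_)
    rcases eq_or_ne k j with rfl | hk
    · exact hwj
    · exact hw k hk

lemma coinB_card (G : SimpleGraph (Fin n)) (a b : ℕ) (i j : Fin b) :
    ((pairSet G a b).filter fun q => i ≠ j ∧ q.2 i = q.2 j).card ≤ NW G a (b - 1) := by
  by_cases hij : i = j
  · simp [hij]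
  · calc ((pairSet G a b).filter fun q => i ≠ j ∧ q.2 i = q.2 j).card
        = ((pairSet G a b).filter fun q => q.2 i = q.2 j).card := by
          congr 1; apply Finset.filter_congr; intro q _; simp [hij]
      _ ≤ NW G a (b - 1) := coin_card G a b i j hij

lemma coinA_card (G : SimpleGraph (Fin n)) (a b : ℕ) (i j : Fin a) :
    ((pairSet G a b).filter fun q => i ≠ j ∧ q.1 i = q.1 j).card ≤ NW G b (a - 1) := by
  refine le_of_eq_of_le
    (card_swap_filter G a b (fun q => i ≠ j ∧ q.1 i = q.1 j)
      (fun q => i ≠ j ∧ q.2 i = q.2 j) (fun q => Iff.rfl))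
    (coinB_card G b a i j)

lemma pair_card_le (G : SimpleGraph (Fin n)) (a b : ℕ) :
    (pairSet G a b).card
      ≤ (ePair G a b).card + a * a * NW G b (a - 1) + b * b * NW G a (b - 1) := by
  have hsplit := Finset.card_filter_add_card_filter_not
    (s := pairSet G a b) (p := fun q => Function.Injective (Sum.elim q.1 q.2))
  rw [← hsplit]
  unfold ePair
  rw [add_assoc]
  refine Nat.add_le_add_left ?_ _
  set B1 : Finset ((Fin a → Fin n) × (Fin b → Fin n)) :=
    (Finset.univ : Finset (Fin a × Fin a)).biUnion fun ij =>
      (pairSet G a b).filter fun q => ij.1 ≠ ij.2 ∧ q.1 ij.1 = q.1 ij.2 with hB1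
  set B2 : Finset ((Fin a → Fin n) × (Fin b → Fin n)) :=
    (Finset.univ : Finset (Fin b × Fin b)).biUnion fun ij =>
      (pairSet G a b).filter fun q => ij.1 ≠ ij.2 ∧ q.2 ij.1 = q.2 ij.2 with hB2
  have hsub : (pairSet G a b).filter
      (fun q => ¬ Function.Injective (Sum.elim q.1 q.2)) ⊆ B1 ∪ B2 := by
    intro q hq
    rw [Finset.mem_filter] at hq
    obtain ⟨hqp, hni⟩ := hq
    rw [Function.not_injective_iff] at hni
    obtain ⟨x, y, hxy, hne⟩ := hni
    have hadj := mem_pairSet.1 hqp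
    rcases x with i | i <;> rcases y with i' | i'
    · refine Finset.mem_union_left _ (Finset.mem_biUnion.2 ⟨(i, i'), Finset.mem_univ _, ?_⟩)
      rw [Finset.mem_filter]
      exact ⟨hqp, by simpa using hne, by simpa using hxy⟩
    · exact absurd (by simpa using hxy) (hadj i' i).ne'
    · exact absurd (by simpa using hxy) (hadj i i').ne
    · refine Finset.mem_union_right _ (Finset.mem_biUnion.2 ⟨(i, i'), Finset.mem_univ _, ?_⟩)
      rw [Finset.mem_filter]
      exact ⟨hqp, by simpa using hne, by simpa using hxy⟩
  calc ((pairSet G a b).filter fun q => ¬ Function.Injective (Sum.elim q.1 q.2)).card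
      ≤ (B1 ∪ B2).card := Finset.card_le_card hsub
    _ ≤ B1.card + B2.card := Finset.card_union_le _ _
    _ ≤ a * a * NW G b (a - 1) + b * b * NW G a (b - 1) := by
        refine Nat.add_le_add ?_ ?_
        · calc B1.card ≤ ∑ ij : Fin a × Fin a,
              ((pairSet G a b).filter fun q => ij.1 ≠ ij.2 ∧ q.1 ij.1 = q.1 ij.2).card :=
              Finset.card_biUnion_le
            _ ≤ ∑ _ij : Fin a × Fin a, NW G b (a - 1) :=
              Finset.sum_le_sum fun ij _ => coinA_card G a b ij.1 ij.2
            _ = a * a * NW G b (a - 1) := by simp [mul_assoc]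
        · calc B2.card ≤ ∑ ij : Fin b × Fin b,
              ((pairSet G a b).filter fun q => ij.1 ≠ ij.2 ∧ q.2 ij.1 = q.2 ij.2).card :=
              Finset.card_biUnion_le
            _ ≤ ∑ _ij : Fin b × Fin b, NW G a (b - 1) :=
              Finset.sum_le_sum fun ij _ => coinB_card G a b ij.1 ij.2
            _ = b * b * NW G a (b - 1) := by simp [mul_assoc]

lemma ePair_subset (G : SimpleGraph (Fin n)) (a b : ℕ) : ePair G a b ⊆ pairSet G a b :=
  Finset.filter_subset _ _

end BipAux

section GraphLink

lemma embCount_congr {α β γ : Type*} {F : SimpleGraph α} {F' : SimpleGraph β}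
    (e : F ≃g F') (G : SimpleGraph γ) : embCount F G = embCount F' G := by
  unfold embCount
  apply Nat.card_congr
  exact
    { toFun := fun φ => ⟨φ.1.comp e.symm.toHom,
        by simpa using φ.2.comp e.symm.toEquiv.injective⟩
      invFun := fun φ => ⟨φ.1.comp e.toHom,
        by simpa using φ.2.comp e.toEquiv.injective⟩
      left_inv := fun φ => Subtype.ext (by ext x; simp)
      right_inv := fun φ => Subtype.ext (by ext x; simp) }

lemma edgeCount_congr {α β : Type*} {F : SimpleGraph α} {F' : SimpleGraph β}
    (e : F ≃g F') : edgeCount F = edgeCount F' :=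
  Nat.card_congr e.mapEdgeSet

lemma sDen_congr {α β γ : Type*} [Fintype α] [Fintype β] [Fintype γ]
    {F : SimpleGraph α} {F' : SimpleGraph β} (e : F ≃g F') (p : ℝ) (G : SimpleGraph γ) :
    sDen p F G = sDen p F' G := by
  unfold sDen
  rw [embCount_congr e, edgeCount_congr e, Fintype.card_congr e.toEquiv]

namespace BipAux

variable {n : ℕ}

lemma embCount_pair (G : SimpleGraph (Fin n)) (a b : ℕ) :
    embCount (completeBipartiteGraph (Fin a) (Fin b)) G = (ePair G a b).card := by
  unfold embCount
  rw [← Nat.card_eq_finsetCard]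
  apply Nat.card_congr
  refine
    { toFun := fun φ => ⟨(fun i => φ.1 (Sum.inl i), fun j => φ.1 (Sum.inr j)), ?_⟩
      invFun := fun q => ⟨⟨Sum.elim q.1.1 q.1.2, ?_⟩, (Finset.mem_filter.1 q.2).2⟩
      left_inv := fun φ => Subtype.ext (DFunLike.ext _ _ fun x => by cases x <;> rfl)
      right_inv := fun q => Subtype.ext rfl }
  · simp only [ePair, Finset.mem_filter, mem_pairSet]
    refine ⟨fun j i => φ.1.map_adj (by simp), ?_⟩
    have hfn : (Sum.elim (fun i => φ.1 (Sum.inl i)) (fun j => φ.1 (Sum.inr j))) = ⇑φ.1 := by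
          funext x; cases x <;> rfl
    rw [hfn]; exact φ.2
  · have hq := (Finset.mem_filter.1 q.2).1
    rw [mem_pairSet] at hq
    intro x y hxy
    rcases x with i | i <;> rcases y with i' | i'
    · simp at hxy
    · exact (hq i' i).symm
    · exact hq i i'
    · simp at hxy

lemma ePair_one_one (G : SimpleGraph (Fin n)) : ePair G 1 1 = pairSet G 1 1 := by
  unfold ePair
  apply Finset.filter_true_of_mem
  intro q hq
  rw [mem_pairSet] at hq
  intro x y h
  rcases x with i | i <;> rcases y with i' | i'
  · exact congrArg Sum.inl (Subsingleton.elim i i')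
  · exact absurd h.symm (hq i' i).ne
  · exact absurd h (hq i i').ne
  · exact congrArg Sum.inr (Subsingleton.elim i i')

end BipAux

lemma edgeCount_K (a b : ℕ) :
    edgeCount (completeBipartiteGraph (Fin a) (Fin b)) = a * b := by
  unfold edgeCount
  have hf : Function.Bijective (fun q : Fin a × Fin b =>
      (⟨s(Sum.inl q.1, Sum.inr q.2), by simp⟩ :
        (completeBipartiteGraph (Fin a) (Fin b)).edgeSet)) := by
    constructor
    · intro q q' h
      have h' := congrArg Subtype.val h
      simp only at h'
      rw [Sym2.eq_iff] at h'
      rcases h' with ⟨h1, h2⟩ | ⟨h1, h2⟩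
      · exact Prod.ext (Sum.inl_injective h1) (Sum.inr_injective h2)
      · simp at h1
    · rintro ⟨e, he⟩
      induction e using Sym2.ind with
      | _ x y =>
        rw [SimpleGraph.mem_edgeSet] at he
        rcases x with i | i <;> rcases y with i' | i'
        · simp at he
        · exact ⟨(i, i'), rfl⟩
        · exact ⟨(i', i), Subtype.ext (Sym2.eq_swap)⟩
        · simp at he
  calc Nat.card (completeBipartiteGraph (Fin a) (Fin b)).edgeSet
      = Nat.card (Fin a × Fin b) := (Nat.card_eq_of_bijective _ hf).symm
    _ = a * b := by simp

instance decK {a b : ℕ} : DecidableRel (completeBipartiteGraph (Fin a) (Fin b)).Adj :=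
  fun v w => inferInstanceAs (Decidable (_ ∧ _ ∨ _ ∧ _))

def isoK2 : (⊤ : SimpleGraph (Fin 2)) ≃g completeBipartiteGraph (Fin 1) (Fin 1) where
  toEquiv := (finSumFinEquiv (m := 1) (n := 1)).symm
  map_rel_iff' := by intro a b; revert a b; decide

def isoC4 : SimpleGraph.cycleGraph 4 ≃g completeBipartiteGraph (Fin 2) (Fin 2) where
  toEquiv := ⟨![Sum.inl 0, Sum.inr 0, Sum.inl 1, Sum.inr 1],
    Sum.elim ![0, 2] ![1, 3], by decide, by decide⟩
  map_rel_iff' := by intro a b; revert a b; decide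

def isoKonFin (a b : ℕ) :
    ((completeBipartiteGraph (Fin a) (Fin b)).comap
      (finSumFinEquiv (m := a) (n := b)).symm.toEmbedding)
      ≃g completeBipartiteGraph (Fin a) (Fin b) :=
  SimpleGraph.Iso.comap _ _

end GraphLink

namespace BipAux

open Filter

lemma descTendsto (k : ℕ) :
    Tendsto (fun n : ℕ => ((n.descFactorial k : ℝ) / (n : ℝ) ^ k)) atTop (nhds 1) := by
  have heq : ∀ᶠ n : ℕ in atTop,
      (∏ i ∈ Finset.range k, (1 - (i : ℝ) / n)) = (n.descFactorial k : ℝ) / (n : ℝ) ^ k := by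
    filter_upwards [eventually_ge_atTop k, eventually_ge_atTop 1] with n hn hn1
    have hn0 : (n : ℝ) ≠ 0 := by
      have : (1 : ℝ) ≤ (n : ℝ) := by exact_mod_cast hn1
      linarith
    rw [Nat.descFactorial_eq_prod_range]
    rw [Nat.cast_prod]
    have hcast : ∀ i ∈ Finset.range k, ((n - i : ℕ) : ℝ) = (n : ℝ) - i := by
      intro i hi
      have hi' : i ≤ n := le_trans (Finset.mem_range.1 hi).le hn
      push_cast [hi']
      ring
    rw [Finset.prod_congr rfl hcast]
    have hpow : (n : ℝ) ^ k = ∏ _i ∈ Finset.range k, (n : ℝ) := by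
      rw [Finset.prod_const, Finset.card_range]
    rw [hpow, ← Finset.prod_div_distrib]
    refine Finset.prod_congr rfl fun i _ => ?_
    field_simp
  refine Tendsto.congr' heq ?_
  have h1 : (1 : ℝ) = ∏ _i ∈ Finset.range k, (1 : ℝ) := by simp
  rw [h1]
  refine tendsto_finset_prod _ fun i _ => ?_
  have : Tendsto (fun n : ℕ => (i : ℝ) / n) atTop (nhds 0) :=
    tendsto_const_div_atTop_nhds_zero_nat _
  simpa using tendsto_const_nhds.sub this

section WithP

variable {p : ℕ → ℝ} {G : ∀ n, SimpleGraph (Fin n)}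

lemma ptend (hp : ∀ n, p n ∈ Set.Ioc (0:ℝ) 1)
    (hpslow : ∀ α : ℝ, 0 < α → ∀ᶠ n : ℕ in atTop, (n:ℝ) ^ (-α) ≤ p n) (d : ℕ) :
    Tendsto (fun n : ℕ => p n ^ d * (n : ℝ)) atTop atTop := by
  set α : ℝ := 1 / (2 * (d + 1)) with hα
  have hα0 : 0 < α := by positivity
  have hbig : ∀ᶠ n : ℕ in atTop, (n : ℝ) ^ ((1:ℝ)/2) ≤ p n ^ d * n := by
    filter_upwards [hpslow α hα0, eventually_ge_atTop 1] with n hpn hn1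
    have hn1' : (1 : ℝ) ≤ (n : ℝ) := by exact_mod_cast hn1
    have hn0 : (0 : ℝ) ≤ (n : ℝ) := by linarith
    have h1 : ((n : ℝ) ^ (-α)) ^ d ≤ p n ^ d :=
      pow_le_pow_left₀ (Real.rpow_nonneg hn0 _) hpn d
    have h2 : ((n : ℝ) ^ (-α)) ^ d = (n : ℝ) ^ (-(α * d)) := by
      rw [← Real.rpow_natCast ((n:ℝ) ^ (-α)) d, ← Real.rpow_mul hn0]
      ring_nf
    have h3 : (n : ℝ) ^ (-(α * d)) * (n : ℝ) = (n : ℝ) ^ (1 - α * d) := by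
      rw [show (1 - α * (d:ℝ)) = (-(α * ↑d)) + 1 by ring,
        Real.rpow_add (by linarith : (0:ℝ) < (n:ℝ)), Real.rpow_one]
    have h4 : (n : ℝ) ^ ((1:ℝ)/2) ≤ (n : ℝ) ^ (1 - α * d) := by
      apply Real.rpow_le_rpow_of_exponent_le hn1'
      rw [hα]
      rw [div_mul_eq_mul_div, one_mul]
      have hd : (d : ℝ) ≤ d + 1 := by linarith
      have : (d : ℝ) / (2 * (d + 1)) ≤ 1 / 2 := by
        rw [div_le_div_iff₀ (by positivity) (by norm_num)]
        linarith
      linarith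
    calc (n : ℝ) ^ ((1:ℝ)/2) ≤ (n : ℝ) ^ (1 - α * d) := h4
      _ = (n : ℝ) ^ (-(α * d)) * n := h3.symm
      _ ≤ p n ^ d * n := by
          rw [← h2]
          exact mul_le_mul_of_nonneg_right h1 hn0
  refine tendsto_atTop_mono' _ hbig ?_
  exact (tendsto_rpow_atTop (by norm_num)).comp tendsto_natCast_atTop_atTop

lemma psmall (hp : ∀ n, p n ∈ Set.Ioc (0:ℝ) 1)
    (hpslow : ∀ α : ℝ, 0 < α → ∀ᶠ n : ℕ in atTop, (n:ℝ) ^ (-α) ≤ p n)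
    (d : ℕ) (A : ℝ) {ε : ℝ} (hε : 0 < ε) :
    ∀ᶠ n : ℕ in atTop, A ≤ ε * (p n ^ d * n) := by
  filter_upwards [(ptend hp hpslow d).eventually_ge_atTop (A / ε)] with n h
  rw [div_le_iff₀ hε] at h
  calc A ≤ p n ^ d * n * ε := h
    _ = ε * (p n ^ d * n) := by ring

end WithP

lemma NW_cast {n : ℕ} (G : SimpleGraph (Fin n)) (a b : ℕ) :
    (NW G a b : ℝ) = ∑ v : Fin a → Fin n, ((cnbF G v).card : ℝ) ^ b := by
  unfold NW
  push_cast
  rfl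

lemma NW_sq_le {n : ℕ} (G : SimpleGraph (Fin n)) (a b : ℕ) :
    (NW G a b : ℝ) ^ 2 ≤ (n : ℝ) ^ a * (NW G a (b * 2) : ℝ) := by
  rw [NW_cast, NW_cast]
  calc (∑ v : Fin a → Fin n, ((cnbF G v).card : ℝ) ^ b) ^ 2
      ≤ (Finset.univ.card : ℝ) * ∑ v : Fin a → Fin n, (((cnbF G v).card : ℝ) ^ b) ^ 2 :=
        by exact_mod_cast sq_sum_le_card_mul_sum_sq
    _ = (n : ℝ) ^ a * ∑ v : Fin a → Fin n, ((cnbF G v).card : ℝ) ^ (b * 2) := by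
        rw [Finset.card_univ]
        congr 1
        · norm_cast
          simp [Fintype.card_fun]
        · exact Finset.sum_congr rfl fun v _ => by rw [← pow_mul]

def tRat (p : ℕ → ℝ) (G : ∀ n, SimpleGraph (Fin n)) (a b : ℕ) (n : ℕ) : ℝ :=
  (NW (G n) a b : ℝ) / (p n ^ (a * b) * (n : ℝ) ^ (a + b))

lemma tRat_comm (p : ℕ → ℝ) (G : ∀ n, SimpleGraph (Fin n)) (a b : ℕ) :
    tRat p G a b = tRat p G b a := by
  funext n
  unfold tRat
  rw [NW_comm, mul_comm a b, add_comm a b]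

lemma pow_one_add_le (b : ℕ) {η : ℝ} (h0 : 0 ≤ η) (h1 : η ≤ 1) :
    (1 + η) ^ b ≤ 1 + 3 ^ b * η := by
  induction b with
  | zero => simp; linarith
  | succ b ih =>
    have h3 : (1:ℝ) ≤ 3 ^ b := one_le_pow₀ (by norm_num)
    calc (1 + η) ^ (b + 1) = (1 + η) ^ b * (1 + η) := by ring
      _ ≤ (1 + 3 ^ b * η) * (1 + η) := by nlinarith
      _ ≤ 1 + 3 ^ (b + 1) * η := by
          have hsucc : (3:ℝ) ^ (b + 1) = 3 * 3 ^ b := by ring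
          have hη2 : η * η ≤ η := mul_le_of_le_one_left h0 h1
          have h3n : (0:ℝ) ≤ 3 ^ b := by positivity
          nlinarith [mul_le_mul_of_nonneg_left hη2 h3n]

end BipAux

namespace BipAux

open Filter

lemma sDen_K {n : ℕ} (q : ℝ) (G : SimpleGraph (Fin n)) (s t : ℕ) :
    sDen q (completeBipartiteGraph (Fin s) (Fin t)) G
      = ((ePair G s t).card : ℝ) / (q ^ (s * t) * (n.descFactorial (s + t) : ℝ)) := by
  unfold sDen
  rw [embCount_pair, edgeCount_K]
  norm_num [Fintype.card_sum, Fintype.card_fin]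

lemma NW_zero_right {n : ℕ} (G : SimpleGraph (Fin n)) (a : ℕ) : NW G a 0 = n ^ a := by
  unfold NW
  simp [Finset.card_univ, Fintype.card_fun]

lemma NW_zero_left {n : ℕ} (G : SimpleGraph (Fin n)) (b : ℕ) : NW G 0 b ≤ n ^ b := by
  unfold NW
  rw [Fintype.sum_unique]
  exact Nat.pow_le_pow_left (le_trans (Finset.card_filter_le _ _) (by simp)) b

section WithP

variable {p : ℕ → ℝ} {G : ∀ n, SimpleGraph (Fin n)}

lemma NW_bound (hp : ∀ n, p n ∈ Set.Ioc (0:ℝ) 1)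
    (hpslow : ∀ α : ℝ, 0 < α → ∀ᶠ n : ℕ in atTop, (n:ℝ) ^ (-α) ≤ p n)
    (hbdd : ∀ (m : ℕ) (F : SimpleGraph (Fin m)), ∃ M : ℝ, ∀ n, sDen (p n) F (G n) ≤ M) :
    ∀ a b : ℕ, ∃ C : ℝ, 0 < C ∧
      ∀ᶠ n : ℕ in atTop, (NW (G n) a b : ℝ) ≤ C * (p n ^ (a * b) * (n : ℝ) ^ (a + b)) := by
  suffices H : ∀ k a b : ℕ, a + b ≤ k → ∃ C : ℝ, 0 < C ∧
      ∀ᶠ n : ℕ in atTop, (NW (G n) a b : ℝ) ≤ C * (p n ^ (a * b) * (n : ℝ) ^ (a + b)) from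
    fun a b => H (a + b) a b le_rfl
  intro k
  induction k with
  | zero =>
    intro a b hab
    obtain ⟨rfl, rfl⟩ : a = 0 ∧ b = 0 := by omega
    refine ⟨1, one_pos, Eventually.of_forall fun n => ?_⟩
    have h := NW_zero_left (G n) 0
    simp only [pow_zero] at h ⊢
    norm_num
    exact_mod_cast h
  | succ k ih =>
    intro a b hab
    match a, b with
    | 0, b =>
      refine ⟨1, one_pos, Eventually.of_forall fun n => ?_⟩
      have h := NW_zero_left (G n) b
      have : (NW (G n) 0 b : ℝ) ≤ (n : ℝ) ^ b := by exact_mod_cast h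
      simpa using this
    | a + 1, 0 =>
      refine ⟨1, one_pos, Eventually.of_forall fun n => ?_⟩
      have h := NW_zero_right (G n) (a + 1)
      have : (NW (G n) (a+1) 0 : ℝ) = (n : ℝ) ^ (a+1) := by exact_mod_cast congrArg Nat.cast h
      simpa using this.le
    | a + 1, b + 1 =>
      obtain ⟨C1, hC10, hC1⟩ := ih (b + 1) a (by omega)
      obtain ⟨C2, hC20, hC2⟩ := ih (a + 1) b (by omega)
      obtain ⟨M, hM⟩ := hbdd (a + 1 + (b + 1))
        ((completeBipartiteGraph (Fin (a+1)) (Fin (b+1))).comap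
          (finSumFinEquiv (m := a+1) (n := b+1)).symm.toEmbedding)
      have hMK : ∀ n, sDen (p n) (completeBipartiteGraph (Fin (a+1)) (Fin (b+1))) (G n) ≤ M :=
        fun n => le_trans (le_of_eq (sDen_congr (isoKonFin (a+1) (b+1)) (p n) (G n)).symm) (hM n)
      set M' : ℝ := max M 0 + 1 with hM'def
      have hM'0 : 0 < M' := by positivity
      refine ⟨M' + 2, by positivity, ?_⟩
      filter_upwards [hC1, hC2, eventually_ge_atTop (a + b + 2),
        psmall hp hpslow (b + 1) ((a+1) * (a+1) * C1) one_pos,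
        psmall hp hpslow (a + 1) ((b+1) * (b+1) * C2) one_pos] with n h1 h2 hn hs1 hs2
      have hp0 : 0 < p n := (hp n).1
      set P : ℝ := p n with hP
      set N : ℝ := (n : ℝ) with hN
      have hN0 : (0 : ℝ) ≤ N := Nat.cast_nonneg n
      -- bound on ePair via hbdd
      have hdesc0 : 0 < (n.descFactorial (a + 1 + (b + 1)) : ℝ) := by
        have : n.descFactorial (a + 1 + (b + 1)) ≠ 0 := by
          rw [Ne, Nat.descFactorial_eq_zero_iff_lt]
          omega
        positivity
      have hE : ((ePair (G n) (a+1) (b+1)).card : ℝ)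
          ≤ M' * (P ^ ((a+1) * (b+1)) * N ^ (a + 1 + (b + 1))) := by
        have hsd := hMK n
        rw [sDen_K] at hsd
        rw [div_le_iff₀ (by positivity)] at hsd
        have hdle : (n.descFactorial (a + 1 + (b + 1)) : ℝ) ≤ N ^ (a + 1 + (b + 1)) := by
          rw [hN]
          exact_mod_cast Nat.descFactorial_le_pow n _
        calc ((ePair (G n) (a+1) (b+1)).card : ℝ)
            ≤ M * (P ^ ((a+1) * (b+1)) * (n.descFactorial (a + 1 + (b + 1)) : ℝ)) := hsd
          _ ≤ M' * (P ^ ((a+1) * (b+1)) * N ^ (a + 1 + (b + 1))) := by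
              have hMM' : M ≤ M' := by rw [hM'def]; have := le_max_left M 0; linarith
              have h1' : M * (P ^ ((a+1) * (b+1)) * (n.descFactorial (a + 1 + (b + 1)) : ℝ))
                  ≤ M' * (P ^ ((a+1) * (b+1)) * (n.descFactorial (a + 1 + (b + 1)) : ℝ)) := by
                apply mul_le_mul_of_nonneg_right hMM' (by positivity)
              refine le_trans h1' ?_
              apply mul_le_mul_of_nonneg_left ?_ hM'0.le
              apply mul_le_mul_of_nonneg_left hdle (by positivity)
      have hT1 : ((a+1 : ℕ) : ℝ) * (a+1 : ℕ) * (NW (G n) (b+1) a : ℝ)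
          ≤ P ^ ((a+1) * (b+1)) * N ^ (a + 1 + (b + 1)) := by
        calc ((a+1 : ℕ) : ℝ) * (a+1 : ℕ) * (NW (G n) (b+1) a : ℝ)
            ≤ ((a+1 : ℕ) : ℝ) * (a+1 : ℕ) * (C1 * (P ^ ((b+1) * a) * N ^ (b + 1 + a))) := by
              apply mul_le_mul_of_nonneg_left h1 (by positivity)
          _ = ((a+1) * (a+1) * C1) * (P ^ ((b+1) * a) * N ^ (b + 1 + a)) := by push_cast; ring
          _ ≤ (1 * (P ^ (b+1) * N)) * (P ^ ((b+1) * a) * N ^ (b + 1 + a)) := by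
              apply mul_le_mul_of_nonneg_right ?_ (by positivity)
              exact_mod_cast hs1
          _ = P ^ ((a+1) * (b+1)) * N ^ (a + 1 + (b + 1)) := by
              rw [one_mul, show (a+1) * (b+1) = (b+1) + (b+1) * a by ring,
                show a + 1 + (b + 1) = 1 + (b + 1 + a) by ring, pow_add, pow_add, pow_one]
              ring
      have hT2 : ((b+1 : ℕ) : ℝ) * (b+1 : ℕ) * (NW (G n) (a+1) b : ℝ)
          ≤ P ^ ((a+1) * (b+1)) * N ^ (a + 1 + (b + 1)) := by
        calc ((b+1 : ℕ) : ℝ) * (b+1 : ℕ) * (NW (G n) (a+1) b : ℝ)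
            ≤ ((b+1 : ℕ) : ℝ) * (b+1 : ℕ) * (C2 * (P ^ ((a+1) * b) * N ^ (a + 1 + b))) := by
              apply mul_le_mul_of_nonneg_left h2 (by positivity)
          _ = ((b+1) * (b+1) * C2) * (P ^ ((a+1) * b) * N ^ (a + 1 + b)) := by push_cast; ring
          _ ≤ (1 * (P ^ (a+1) * N)) * (P ^ ((a+1) * b) * N ^ (a + 1 + b)) := by
              apply mul_le_mul_of_nonneg_right ?_ (by positivity)
              exact_mod_cast hs2
          _ = P ^ ((a+1) * (b+1)) * N ^ (a + 1 + (b + 1)) := by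
              rw [one_mul, show (a+1) * (b+1) = (a+1) + (a+1) * b by ring,
                show a + 1 + (b + 1) = 1 + (a + 1 + b) by ring, pow_add, pow_add, pow_one]
              ring
      have hmain : (NW (G n) (a+1) (b+1) : ℝ) ≤ ((ePair (G n) (a+1) (b+1)).card : ℝ)
          + ((a+1 : ℕ) : ℝ) * (a+1 : ℕ) * (NW (G n) (b+1) a : ℝ)
          + ((b+1 : ℕ) : ℝ) * (b+1 : ℕ) * (NW (G n) (a+1) b : ℝ) := by
        have h := pair_card_le (G n) (a+1) (b+1)
        rw [card_pairSet] at h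
        simp only [Nat.add_sub_cancel] at h
        exact_mod_cast h
      calc (NW (G n) (a+1) (b+1) : ℝ)
          ≤ _ := hmain
        _ ≤ M' * (P ^ ((a+1) * (b+1)) * N ^ (a + 1 + (b + 1)))
            + P ^ ((a+1) * (b+1)) * N ^ (a + 1 + (b + 1))
            + P ^ ((a+1) * (b+1)) * N ^ (a + 1 + (b + 1)) := by
            exact add_le_add (add_le_add hE hT1) hT2
        _ = (M' + 2) * (P ^ ((a+1) * (b+1)) * N ^ (a + 1 + (b + 1))) := by ring

end WithP

end BipAux

namespace BipAux

open Filter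

lemma invDescTendsto (k : ℕ) :
    Tendsto (fun n : ℕ => ((n : ℝ) ^ k / (n.descFactorial k : ℝ))) atTop (nhds 1) := by
  have h := (descTendsto k).inv₀ one_ne_zero
  rw [inv_one] at h
  refine h.congr fun n => ?_
  rw [← one_div, one_div_div]

section WithP

variable {p : ℕ → ℝ} {G : ∀ n, SimpleGraph (Fin n)}

lemma E_eq_sDen (hp : ∀ n, p n ∈ Set.Ioc (0:ℝ) 1) (s t : ℕ) :
    ∀ᶠ n : ℕ in atTop, ((ePair (G n) s t).card : ℝ) / (p n ^ (s * t) * (n : ℝ) ^ (s + t))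
      = sDen (p n) (completeBipartiteGraph (Fin s) (Fin t)) (G n)
        * ((n.descFactorial (s + t) : ℝ) / (n : ℝ) ^ (s + t)) := by
  filter_upwards [eventually_ge_atTop (s + t + 1)] with n hn
  have hd0 : (0:ℝ) < (n.descFactorial (s + t) : ℝ) := by
    have : n.descFactorial (s + t) ≠ 0 := by
      rw [Ne, Nat.descFactorial_eq_zero_iff_lt]; omega
    positivity
  have hn0 : (0:ℝ) < (n:ℝ) := by
    have : 1 ≤ n := by omega
    exact_mod_cast Nat.lt_of_lt_of_le Nat.zero_lt_one this
  have hp0 : (0:ℝ) < p n := (hp n).1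
  rw [sDen_K]
  field_simp

lemma sDen_to_E (hp : ∀ n, p n ∈ Set.Ioc (0:ℝ) 1) (s t : ℕ)
    (h : Tendsto (fun n => sDen (p n) (completeBipartiteGraph (Fin s) (Fin t)) (G n))
      atTop (nhds 1)) :
    Tendsto (fun n : ℕ =>
      ((ePair (G n) s t).card : ℝ) / (p n ^ (s * t) * (n : ℝ) ^ (s + t))) atTop (nhds 1) := by
  have := h.mul (descTendsto (s + t))
  rw [mul_one] at this
  exact Tendsto.congr' (by filter_upwards [E_eq_sDen hp s t] with n hn using hn.symm) this

lemma E_to_sDen (hp : ∀ n, p n ∈ Set.Ioc (0:ℝ) 1) (s t : ℕ)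
    (h : Tendsto (fun n : ℕ =>
      ((ePair (G n) s t).card : ℝ) / (p n ^ (s * t) * (n : ℝ) ^ (s + t))) atTop (nhds 1)) :
    Tendsto (fun n => sDen (p n) (completeBipartiteGraph (Fin s) (Fin t)) (G n))
      atTop (nhds 1) := by
  have hmul := h.mul (invDescTendsto (s + t))
  rw [mul_one] at hmul
  refine Tendsto.congr' ?_ hmul
  filter_upwards [E_eq_sDen hp s t, eventually_ge_atTop (s + t + 1)] with n hn hn'
  have hd0 : (0:ℝ) < (n.descFactorial (s + t) : ℝ) := by
    have : n.descFactorial (s + t) ≠ 0 := by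
      rw [Ne, Nat.descFactorial_eq_zero_iff_lt]; omega
    positivity
  have hn0 : (0:ℝ) < (n:ℝ) := by
    have : 1 ≤ n := by omega
    exact_mod_cast Nat.lt_of_lt_of_le Nat.zero_lt_one this
  rw [hn]
  field_simp

lemma ht11 (hp : ∀ n, p n ∈ Set.Ioc (0:ℝ) 1)
    (hK2 : Tendsto (fun n => sDen (p n) (⊤ : SimpleGraph (Fin 2)) (G n)) atTop (nhds 1)) :
    Tendsto (tRat p G 1 1) atTop (nhds 1) := by
  have hK2' : Tendsto (fun n => sDen (p n)
      (completeBipartiteGraph (Fin 1) (Fin 1)) (G n)) atTop (nhds 1) := by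
    refine hK2.congr fun n => ?_
    exact sDen_congr isoK2 (p n) (G n)
  have hE := sDen_to_E hp 1 1 hK2'
  refine hE.congr fun n => ?_
  unfold tRat
  rw [ePair_one_one, card_pairSet]

lemma ht22 (hp : ∀ n, p n ∈ Set.Ioc (0:ℝ) 1)
    (hpslow : ∀ α : ℝ, 0 < α → ∀ᶠ n : ℕ in atTop, (n:ℝ) ^ (-α) ≤ p n)
    (hbdd : ∀ (m : ℕ) (F : SimpleGraph (Fin m)), ∃ M : ℝ, ∀ n, sDen (p n) F (G n) ≤ M)
    (hC4 : Tendsto (fun n => sDen (p n) (SimpleGraph.cycleGraph 4) (G n)) atTop (nhds 1)) :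
    Tendsto (tRat p G 2 2) atTop (nhds 1) := by
  have hC4' : Tendsto (fun n => sDen (p n)
      (completeBipartiteGraph (Fin 2) (Fin 2)) (G n)) atTop (nhds 1) := by
    refine hC4.congr fun n => ?_
    exact sDen_congr isoC4 (p n) (G n)
  have hE := sDen_to_E hp 2 2 hC4'
  obtain ⟨C, hC0, hC⟩ := NW_bound hp hpslow hbdd 2 1
  have hjunk : Tendsto (fun n : ℕ => 8 * C * (p n ^ 2 * (n:ℝ))⁻¹) atTop (nhds 0) := by
    have := (ptend hp hpslow 2).inv_tendsto_atTop
    simpa using (this.const_mul (8 * C))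
  have hupp : Tendsto (fun n : ℕ =>
      ((ePair (G n) 2 2).card : ℝ) / (p n ^ (2 * 2) * (n : ℝ) ^ (2 + 2))
        + 8 * C * (p n ^ 2 * (n:ℝ))⁻¹) atTop (nhds 1) := by
    simpa using hE.add hjunk
  refine tendsto_of_tendsto_of_tendsto_of_le_of_le' hE hupp ?_ ?_
  · filter_upwards [eventually_ge_atTop 1] with n hn1
    have hp0 : (0:ℝ) < p n := (hp n).1
    have hn0 : (0:ℝ) < (n:ℝ) := by exact_mod_cast hn1
    unfold tRat
    rw [div_le_div_iff_of_pos_right (by positivity)]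
    have h := Finset.card_le_card (ePair_subset (G n) 2 2)
    rw [card_pairSet] at h
    exact_mod_cast h
  · filter_upwards [hC, eventually_ge_atTop 1] with n hCn hn1
    have hp0 : (0:ℝ) < p n := (hp n).1
    have hn0 : (0:ℝ) < (n:ℝ) := by exact_mod_cast hn1
    have hkey : (NW (G n) 2 2 : ℝ)
        ≤ ((ePair (G n) 2 2).card : ℝ) + 8 * (C * (p n ^ (2*1) * (n:ℝ) ^ (2+1))) := by
      have h := pair_card_le (G n) 2 2
      rw [card_pairSet] at h
      have h' : (NW (G n) 2 2 : ℝ)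
          ≤ ((ePair (G n) 2 2).card : ℝ) + 8 * (NW (G n) 2 1 : ℝ) := by
        have h8 : NW (G n) 2 2 ≤ (ePair (G n) 2 2).card + 8 * NW (G n) 2 1 := by
          have e1 : (2 - 1 : ℕ) = 1 := rfl
          rw [e1] at h
          omega
        exact_mod_cast h8
      refine h'.trans ?_
      have := mul_le_mul_of_nonneg_left hCn (by norm_num : (0:ℝ) ≤ 8)
      linarith
    set D : ℝ := p n ^ (2*2) * (n:ℝ) ^ (2+2) with hD
    have hD0 : (0:ℝ) < D := by rw [hD]; positivity
    unfold tRat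
    calc (NW (G n) 2 2 : ℝ) / D
        ≤ (((ePair (G n) 2 2).card : ℝ) + 8 * (C * (p n ^ (2*1) * (n:ℝ) ^ (2+1)))) / D := by
          rw [div_le_div_iff_of_pos_right hD0]; exact hkey
      _ = ((ePair (G n) 2 2).card : ℝ) / D
            + (8 * (C * (p n ^ (2*1) * (n:ℝ) ^ (2+1)))) / D := add_div _ _ _
      _ = ((ePair (G n) 2 2).card : ℝ) / (p n ^ (2*2) * (n:ℝ) ^ (2+2))
            + 8 * C * (p n ^ 2 * (n:ℝ))⁻¹ := by
          rw [hD]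
          congr 1
          field_simp
          ring

end WithP

end BipAux

namespace BipAux

open Filter

section WithP

variable {p : ℕ → ℝ} {G : ∀ n, SimpleGraph (Fin n)}

lemma ht12 (hp : ∀ n, p n ∈ Set.Ioc (0:ℝ) 1)
    (h11 : Tendsto (tRat p G 1 1) atTop (nhds 1))
    (h22 : Tendsto (tRat p G 2 2) atTop (nhds 1)) :
    Tendsto (tRat p G 1 2) atTop (nhds 1) := by
  have hlow : ∀ᶠ n : ℕ in atTop, (tRat p G 1 1 n) ^ 2 ≤ tRat p G 1 2 n := by
    filter_upwards [eventually_ge_atTop 1] with n hn1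
    have hp0 : (0:ℝ) < p n := (hp n).1
    have hn0 : (0:ℝ) < (n:ℝ) := by exact_mod_cast hn1
    have hcs := NW_sq_le (G n) 1 1
    unfold tRat
    rw [div_pow, div_le_div_iff₀ (by positivity) (by positivity)]
    calc (NW (G n) 1 1 : ℝ) ^ 2 * (p n ^ (1*2) * (n:ℝ) ^ (1+2))
        ≤ ((n:ℝ) ^ 1 * (NW (G n) 1 (1*2) : ℝ)) * (p n ^ (1*2) * (n:ℝ) ^ (1+2)) := by
          apply mul_le_mul_of_nonneg_right hcs (by positivity)
      _ = (NW (G n) 1 2 : ℝ) * (p n ^ (1*1) * (n:ℝ) ^ (1+1)) ^ 2 := by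
          norm_num
          ring
  have hupp : ∀ᶠ n : ℕ in atTop, tRat p G 1 2 n ≤ Real.sqrt (tRat p G 2 2 n) := by
    filter_upwards [eventually_ge_atTop 1] with n hn1
    have hp0 : (0:ℝ) < p n := (hp n).1
    have hn0 : (0:ℝ) < (n:ℝ) := by exact_mod_cast hn1
    have h120 : 0 ≤ tRat p G 1 2 n := by unfold tRat; positivity
    have h220 : 0 ≤ tRat p G 2 2 n := by unfold tRat; positivity
    rw [Real.le_sqrt h120 h220]
    have hcs := NW_sq_le (G n) 2 1
    unfold tRat
    rw [div_pow, div_le_div_iff₀ (by positivity) (by positivity)]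
    have hcomm : NW (G n) 1 2 = NW (G n) 2 1 := NW_comm _ _ _
    rw [hcomm]
    calc (NW (G n) 2 1 : ℝ) ^ 2 * (p n ^ (2*2) * (n:ℝ) ^ (2+2))
        ≤ ((n:ℝ) ^ 2 * (NW (G n) 2 (1*2) : ℝ)) * (p n ^ (2*2) * (n:ℝ) ^ (2+2)) := by
          apply mul_le_mul_of_nonneg_right hcs (by positivity)
      _ = (NW (G n) 2 2 : ℝ) * (p n ^ (1*2) * (n:ℝ) ^ (1+2)) ^ 2 := by
          norm_num
          ring
  have hlowt : Tendsto (fun n => (tRat p G 1 1 n) ^ 2) atTop (nhds 1) := by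
    simpa using h11.pow 2
  have huppt : Tendsto (fun n => Real.sqrt (tRat p G 2 2 n)) atTop (nhds 1) := by
    have := (Real.continuous_sqrt.tendsto 1).comp h22
    rw [Real.sqrt_one] at this
    exact this
  exact tendsto_of_tendsto_of_tendsto_of_le_of_le' hlowt huppt hlow hupp

end WithP

end BipAux

namespace BipAux

open Filter

section WithP

variable {p : ℕ → ℝ} {G : ∀ n, SimpleGraph (Fin n)}

lemma conc (hp : ∀ n, p n ∈ Set.Ioc (0:ℝ) 1) (a : ℕ)
    (h1 : Tendsto (tRat p G a 1) atTop (nhds 1))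
    (h2 : Tendsto (tRat p G a 2) atTop (nhds 1)) :
    ∀ ε : ℝ, 0 < ε → ∀ᶠ n : ℕ in atTop,
      ((Finset.univ.filter (fun v : Fin a → Fin n =>
          ε * ((n:ℝ) * p n ^ a) <
            |((cnbF (G n) v).card : ℝ) - (n:ℝ) * p n ^ a|)).card : ℝ) ≤ ε * (n:ℝ) ^ a := by
  intro ε hε
  set δ : ℝ := ε ^ 3 / 4 with hδdef
  have hδ0 : 0 < δ := by positivity
  filter_upwards [Metric.tendsto_nhds.1 h1 δ hδ0, Metric.tendsto_nhds.1 h2 δ hδ0,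
    eventually_ge_atTop 1] with n hd1 hd2 hn1
  have hp0 : (0:ℝ) < p n := (hp n).1
  have hN0 : (0:ℝ) < (n:ℝ) := by exact_mod_cast hn1
  set P : ℝ := p n with hP
  set N : ℝ := (n:ℝ) with hN
  set K : ℝ := N * P ^ a with hK
  have hK0 : 0 < K := by rw [hK]; positivity
  -- deviation bounds
  have habs : ∀ b : ℕ, dist (tRat p G a b n) 1 < δ →
      |(NW (G n) a b : ℝ) - P ^ (a*b) * N ^ (a+b)| ≤ δ * (P ^ (a*b) * N ^ (a+b)) := by
    intro b hd
    rw [Real.dist_eq] at hd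
    have hD0 : (0:ℝ) < P ^ (a*b) * N ^ (a+b) := by positivity
    have heq : (NW (G n) a b : ℝ) - P ^ (a*b) * N ^ (a+b)
        = (tRat p G a b n - 1) * (P ^ (a*b) * N ^ (a+b)) := by
      unfold tRat
      rw [hP, hN]
      field_simp
      rw [mul_sub, mul_div_assoc', mul_div_cancel_left₀ _ (pow_ne_zero _ (hp n).1.ne')]
    rw [heq, abs_mul, abs_of_pos hD0]
    exact mul_le_mul_of_nonneg_right hd.le hD0.le
  have h1' := habs 1 hd1
  have h2' := habs 2 hd2
  -- expansion of the second moment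
  have hexp : ∑ v : Fin a → Fin n, (((cnbF (G n) v).card : ℝ) - K) ^ 2
      = (NW (G n) a 2 : ℝ) - 2 * K * (NW (G n) a 1 : ℝ) + N ^ a * K ^ 2 := by
    have hc1 : (NW (G n) a 1 : ℝ) = ∑ v : Fin a → Fin n, ((cnbF (G n) v).card : ℝ) := by
      rw [NW_cast]
      exact Finset.sum_congr rfl fun v _ => pow_one _
    rw [NW_cast, hc1]
    rw [Finset.mul_sum, ← Finset.sum_sub_distrib]
    have hconst : N ^ a * K ^ 2
        = ∑ _v : Fin a → Fin n, K ^ 2 := by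
      rw [Finset.sum_const, Finset.card_univ, nsmul_eq_mul]
      congr 1
      rw [hN]
      norm_cast
      simp [Fintype.card_fun]
    rw [hconst, ← Finset.sum_add_distrib]
    exact Finset.sum_congr rfl fun v _ => by ring
  -- sum bound
  have hsum : ∑ v : Fin a → Fin n, (((cnbF (G n) v).card : ℝ) - K) ^ 2
      ≤ 3 * δ * (P ^ (a*2) * N ^ (a+2)) := by
    have hzero : P ^ (a*2) * N ^ (a+2) - 2 * K * (P ^ (a*1) * N ^ (a+1)) + N ^ a * K ^ 2 = 0 := by
      rw [hK]; ring
    have hform : ∑ v : Fin a → Fin n, (((cnbF (G n) v).card : ℝ) - K) ^ 2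
        = ((NW (G n) a 2 : ℝ) - P ^ (a*2) * N ^ (a+2))
          - 2 * K * ((NW (G n) a 1 : ℝ) - P ^ (a*1) * N ^ (a+1)) := by
      rw [hexp]
      linear_combination hzero
    rw [hform]
    have habs2 : |2 * K * ((NW (G n) a 1 : ℝ) - P ^ (a*1) * N ^ (a+1))|
        ≤ 2 * K * (δ * (P ^ (a*1) * N ^ (a+1))) := by
      rw [abs_mul, abs_of_pos (by positivity : (0:ℝ) < 2 * K)]
      exact mul_le_mul_of_nonneg_left h1' (by positivity)
    have hcomb : 2 * K * (δ * (P ^ (a*1) * N ^ (a+1))) = 2 * δ * (P ^ (a*2) * N ^ (a+2)) := by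
      rw [hK]; ring
    calc ((NW (G n) a 2 : ℝ) - P ^ (a*2) * N ^ (a+2))
          - 2 * K * ((NW (G n) a 1 : ℝ) - P ^ (a*1) * N ^ (a+1))
        ≤ |((NW (G n) a 2 : ℝ) - P ^ (a*2) * N ^ (a+2))
          - 2 * K * ((NW (G n) a 1 : ℝ) - P ^ (a*1) * N ^ (a+1))| := le_abs_self _
      _ ≤ |(NW (G n) a 2 : ℝ) - P ^ (a*2) * N ^ (a+2)|
          + |2 * K * ((NW (G n) a 1 : ℝ) - P ^ (a*1) * N ^ (a+1))| := abs_sub _ _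
      _ ≤ δ * (P ^ (a*2) * N ^ (a+2)) + 2 * δ * (P ^ (a*2) * N ^ (a+2)) := by
          rw [← hcomb]
          exact add_le_add h2' habs2
      _ = 3 * δ * (P ^ (a*2) * N ^ (a+2)) := by ring
  -- bad set
  set B := Finset.univ.filter (fun v : Fin a → Fin n =>
    ε * K < |((cnbF (G n) v).card : ℝ) - K|) with hB
  have hBsum : (B.card : ℝ) * (ε * K) ^ 2
      ≤ ∑ v : Fin a → Fin n, (((cnbF (G n) v).card : ℝ) - K) ^ 2 := by
    have hle : ∀ v ∈ B, (ε * K) ^ 2 ≤ (((cnbF (G n) v).card : ℝ) - K) ^ 2 := by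
      intro v hv
      rw [hB, Finset.mem_filter] at hv
      calc (ε * K) ^ 2 ≤ |((cnbF (G n) v).card : ℝ) - K| ^ 2 := by
            apply pow_le_pow_left₀ (by positivity) hv.2.le
        _ = (((cnbF (G n) v).card : ℝ) - K) ^ 2 := sq_abs _
    calc (B.card : ℝ) * (ε * K) ^ 2 ≤ ∑ v ∈ B, (((cnbF (G n) v).card : ℝ) - K) ^ 2 := by
          simpa [nsmul_eq_mul] using Finset.card_nsmul_le_sum B _ _ hle
      _ ≤ ∑ v : Fin a → Fin n, (((cnbF (G n) v).card : ℝ) - K) ^ 2 :=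
          Finset.sum_le_sum_of_subset_of_nonneg (Finset.subset_univ B)
            (fun v _ _ => sq_nonneg _)
  have hfinal : (B.card : ℝ) ≤ ε * N ^ a := by
    have hX0 : (0:ℝ) < (ε * K) ^ 2 := by positivity
    have hY : 3 * δ * (P ^ (a*2) * N ^ (a+2)) ≤ (ε * N ^ a) * (ε * K) ^ 2 := by
      have e1 : (ε * N ^ a) * (ε * K) ^ 2 = ε ^ 3 * (P ^ (a*2) * N ^ (a+2)) := by
        rw [hK]; ring
      have e2 : 3 * δ * (P ^ (a*2) * N ^ (a+2))
          = (3/4) * (ε ^ 3 * (P ^ (a*2) * N ^ (a+2))) := by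
        rw [hδdef]; ring
      rw [e1, e2]
      have : (0:ℝ) ≤ ε ^ 3 * (P ^ (a*2) * N ^ (a+2)) := by positivity
      linarith
    have := le_trans (le_trans hBsum hsum) hY
    exact le_of_mul_le_mul_right this hX0
  exact hfinal

end WithP

end BipAux

namespace BipAux

open Filter

section WithP

variable {p : ℕ → ℝ} {G : ∀ n, SimpleGraph (Fin n)}

set_option maxHeartbeats 1000000 in
lemma moment (hp : ∀ n, p n ∈ Set.Ioc (0:ℝ) 1) (a b : ℕ)
    (hflat : ∀ ε : ℝ, 0 < ε → ∀ᶠ n : ℕ in atTop,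
      ((Finset.univ.filter (fun v : Fin a → Fin n =>
          ε * ((n:ℝ) * p n ^ a) <
            |((cnbF (G n) v).card : ℝ) - (n:ℝ) * p n ^ a|)).card : ℝ) ≤ ε * (n:ℝ) ^ a)
    (C : ℝ) (hC0 : 0 < C)
    (hbd : ∀ᶠ n : ℕ in atTop,
      (NW (G n) a (2*b) : ℝ) ≤ C * (p n ^ (a*(2*b)) * (n:ℝ) ^ (a+2*b))) :
    Tendsto (tRat p G a b) atTop (nhds 1) := by
  rw [Metric.tendsto_nhds]
  intro ε hε
  set η : ℝ := min 1 (min (ε/(4*3^b)) (min ((ε/4)^2/C) (ε/(2*(b+1))))) with hηdef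
  have h3b : (0:ℝ) < 3 ^ b := by positivity
  have hη0 : 0 < η := by
    apply lt_min one_pos
    apply lt_min (by positivity)
    exact lt_min (by positivity) (by positivity)
  have hη1 : η ≤ 1 := min_le_left _ _
  have hηa : η ≤ ε/(4*3^b) := le_trans (min_le_right _ _) (min_le_left _ _)
  have hηb : η ≤ (ε/4)^2/C :=
    le_trans (min_le_right _ _) (le_trans (min_le_right _ _) (min_le_left _ _))
  have hηc : η ≤ ε/(2*(b+1)) :=
    le_trans (min_le_right _ _) (le_trans (min_le_right _ _) (min_le_right _ _))
  filter_upwards [hflat η hη0, hbd, eventually_ge_atTop 1] with n hfl hb2 hn1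
  have hp0 : (0:ℝ) < p n := (hp n).1
  have hN0 : (0:ℝ) < (n:ℝ) := by exact_mod_cast hn1
  set P : ℝ := p n with hP
  set N : ℝ := (n:ℝ) with hN
  set K : ℝ := N * P ^ a with hK
  have hK0 : 0 < K := by rw [hK]; positivity
  set D : ℝ := P ^ (a*b) * N ^ (a+b) with hD
  have hD0 : 0 < D := by rw [hD]; positivity
  have hNa : (0:ℝ) < N ^ a := by positivity
  -- the partition into good and bad
  set Bd := Finset.univ.filter (fun v : Fin a → Fin n =>
    η * K < |((cnbF (G n) v).card : ℝ) - K|) with hBd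
  set Gd := Finset.univ.filter (fun v : Fin a → Fin n =>
    ¬ (η * K < |((cnbF (G n) v).card : ℝ) - K|)) with hGd
  have hsplit : (NW (G n) a b : ℝ)
      = (∑ v ∈ Bd, ((cnbF (G n) v).card : ℝ) ^ b) + ∑ v ∈ Gd, ((cnbF (G n) v).card : ℝ) ^ b := by
    rw [NW_cast, hBd, hGd]
    exact (Finset.sum_filter_add_sum_filter_not _ _ _).symm
  have hBcard : (Bd.card : ℝ) ≤ η * N ^ a := hfl
  have hcards : (Bd.card : ℝ) + (Gd.card : ℝ) = N ^ a := by
    have := Finset.card_filter_add_card_filter_not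
      (s := (Finset.univ : Finset (Fin a → Fin n)))
      (p := fun v => η * K < |((cnbF (G n) v).card : ℝ) - K|)
    have hcu : (Finset.univ : Finset (Fin a → Fin n)).card = n ^ a := by
      simp [Fintype.card_fun]
    rw [hcu] at this
    rw [hBd, hGd]
    rw [hN]
    exact_mod_cast this
  have hGcard_le : (Gd.card : ℝ) ≤ N ^ a := by linarith [Nat.cast_nonneg (α := ℝ) Bd.card]
  have hGcard_ge : (1 - η) * N ^ a ≤ (Gd.card : ℝ) := by nlinarith
  -- good bounds
  have hgood : ∀ v ∈ Gd, (1 - η) * K ≤ ((cnbF (G n) v).card : ℝ)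
      ∧ ((cnbF (G n) v).card : ℝ) ≤ (1 + η) * K := by
    intro v hv
    rw [hGd, Finset.mem_filter] at hv
    have h1 := (abs_le.1 (not_lt.1 hv.2)).1
    have h2 := (abs_le.1 (not_lt.1 hv.2)).2
    constructor <;> [nlinarith [h1]; nlinarith [h2]]
  -- upper bound for good sum
  have hgood_up : ∑ v ∈ Gd, ((cnbF (G n) v).card : ℝ) ^ b
      ≤ (1 + 3 ^ b * η) * D := by
    have hterm : ∀ v ∈ Gd, ((cnbF (G n) v).card : ℝ) ^ b ≤ ((1 + η) * K) ^ b := by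
      intro v hv
      exact pow_le_pow_left₀ (Nat.cast_nonneg _) (hgood v hv).2 b
    calc ∑ v ∈ Gd, ((cnbF (G n) v).card : ℝ) ^ b
        ≤ Gd.card • ((1 + η) * K) ^ b := Finset.sum_le_card_nsmul _ _ _ hterm
      _ = (Gd.card : ℝ) * ((1 + η) * K) ^ b := nsmul_eq_mul _ _
      _ ≤ N ^ a * ((1 + η) ^ b * K ^ b) := by
          rw [mul_pow]
          apply mul_le_mul_of_nonneg_right hGcard_le (by positivity)
      _ ≤ N ^ a * ((1 + 3 ^ b * η) * K ^ b) := by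
          apply mul_le_mul_of_nonneg_left ?_ hNa.le
          apply mul_le_mul_of_nonneg_right (pow_one_add_le b hη0.le hη1) (by positivity)
      _ = (1 + 3 ^ b * η) * D := by
          rw [hK, hD, mul_pow, ← pow_mul]
          ring
  -- lower bound for good sum
  have hgood_lo : (1 - (b+1) * η) * D ≤ ∑ v ∈ Gd, ((cnbF (G n) v).card : ℝ) ^ b := by
    have hterm : ∀ v ∈ Gd, ((1 - η) * K) ^ b ≤ ((cnbF (G n) v).card : ℝ) ^ b := by
      intro v hv
      exact pow_le_pow_left₀ (by nlinarith) (hgood v hv).1 b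
    have hbern : 1 - ((b:ℝ)+1) * η ≤ (1 - η) ^ (b+1) := by
      have := one_add_mul_le_pow (a := -η) (by linarith) (b+1)
      calc 1 - ((b:ℝ)+1) * η = 1 + ((b:ℝ)+1) * (-η) := by ring
        _ ≤ (1 + -η) ^ (b+1) := by exact_mod_cast this
        _ = (1 - η) ^ (b+1) := by ring_nf
    calc (1 - ((b:ℝ)+1) * η) * D ≤ (1 - η) ^ (b+1) * D := by
          apply mul_le_mul_of_nonneg_right hbern hD0.le
      _ = ((1 - η) * N ^ a) * ((1 - η) ^ b * K ^ b) := by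
          rw [hK, hD, mul_pow, ← pow_mul, pow_succ]
          ring
      _ ≤ (Gd.card : ℝ) * ((1 - η) * K) ^ b := by
          have hmp : ((1 - η) * K) ^ b = (1 - η) ^ b * K ^ b := mul_pow _ _ _
          rw [hmp]
          exact mul_le_mul_of_nonneg_right hGcard_ge
            (mul_nonneg (pow_nonneg (by linarith) b) (by positivity))
      _ ≤ ∑ v ∈ Gd, ((cnbF (G n) v).card : ℝ) ^ b := by
          have := Finset.card_nsmul_le_sum Gd _ _ hterm
          rwa [nsmul_eq_mul] at this
  -- bad sum bound
  have hbad : ∑ v ∈ Bd, ((cnbF (G n) v).card : ℝ) ^ b ≤ (ε/4) * D := by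
    have hsq : (∑ v ∈ Bd, ((cnbF (G n) v).card : ℝ) ^ b) ^ 2
        ≤ (Bd.card : ℝ) * ∑ v ∈ Bd, (((cnbF (G n) v).card : ℝ) ^ b) ^ 2 := by
      exact_mod_cast sq_sum_le_card_mul_sum_sq
    have hsub : ∑ v ∈ Bd, (((cnbF (G n) v).card : ℝ) ^ b) ^ 2 ≤ (NW (G n) a (2*b) : ℝ) := by
      rw [NW_cast]
      calc ∑ v ∈ Bd, (((cnbF (G n) v).card : ℝ) ^ b) ^ 2
          = ∑ v ∈ Bd, ((cnbF (G n) v).card : ℝ) ^ (2*b) := by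
            refine Finset.sum_congr rfl fun v _ => ?_
            rw [← pow_mul, mul_comm b 2]
        _ ≤ ∑ v : Fin a → Fin n, ((cnbF (G n) v).card : ℝ) ^ (2*b) :=
            Finset.sum_le_sum_of_subset_of_nonneg (Finset.subset_univ _)
              (fun v _ _ => by positivity)
    have hchain : (∑ v ∈ Bd, ((cnbF (G n) v).card : ℝ) ^ b) ^ 2
        ≤ ((ε/4) * D) ^ 2 := by
      have hηC : η * C ≤ (ε/4)^2 := by
        rw [le_div_iff₀ hC0] at hηb
        linarith
      have e1 : (η * N ^ a) * (C * (P ^ (a*(2*b)) * N ^ (a+2*b))) = (η * C) * D ^ 2 := by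
        rw [hD, mul_pow, ← pow_mul, ← pow_mul,
          show (a*b)*2 = a*(2*b) by ring, show (a+b)*2 = a + (a+2*b) by ring, pow_add]
        ring
      calc (∑ v ∈ Bd, ((cnbF (G n) v).card : ℝ) ^ b) ^ 2
          ≤ (Bd.card : ℝ) * ∑ v ∈ Bd, (((cnbF (G n) v).card : ℝ) ^ b) ^ 2 := hsq
        _ ≤ (η * N ^ a) * (NW (G n) a (2*b) : ℝ) := by
            apply mul_le_mul hBcard hsub (Finset.sum_nonneg fun v _ => by positivity)
              (by positivity)
        _ ≤ (η * N ^ a) * (C * (P ^ (a*(2*b)) * N ^ (a+2*b))) := by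
            apply mul_le_mul_of_nonneg_left hb2 (by positivity)
        _ = (η * C) * D ^ 2 := e1
        _ ≤ (ε/4)^2 * D ^ 2 := by
            apply mul_le_mul_of_nonneg_right hηC (by positivity)
        _ = ((ε/4) * D) ^ 2 := by ring
    have hs0 : 0 ≤ ∑ v ∈ Bd, ((cnbF (G n) v).card : ℝ) ^ b :=
      Finset.sum_nonneg fun v _ => by positivity
    nlinarith [hchain, hs0, mul_pos (by positivity : (0:ℝ) < ε/4) hD0]
  -- combine
  have hup : (NW (G n) a b : ℝ) - D ≤ (ε/2) * D := by
    have h3 : 3 ^ b * η ≤ ε/4 := by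
      rw [le_div_iff₀ (by positivity : (0:ℝ) < 4*3^b)] at hηa
      nlinarith
    have hmul := mul_le_mul_of_nonneg_right h3 hD0.le
    rw [hsplit]
    linarith [hgood_up, hbad]
  have hlo : D - (NW (G n) a b : ℝ) ≤ (ε/2) * D := by
    have hb1 : ((b:ℝ)+1) * η ≤ ε/2 := by
      rw [le_div_iff₀ (by positivity : (0:ℝ) < 2*((b:ℝ)+1))] at hηc
      nlinarith [Nat.cast_nonneg (α := ℝ) b]
    have hbad0 : 0 ≤ ∑ v ∈ Bd, ((cnbF (G n) v).card : ℝ) ^ b :=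
      Finset.sum_nonneg fun v _ => by positivity
    have hmul := mul_le_mul_of_nonneg_right hb1 hD0.le
    rw [hsplit]
    linarith [hgood_lo]
  rw [Real.dist_eq]
  have heq : tRat p G a b n - 1 = ((NW (G n) a b : ℝ) - D) / D := by
    unfold tRat
    rw [← hP, ← hN, ← hD]
    field_simp
  rw [heq, abs_div, abs_of_pos hD0, div_lt_iff₀ hD0]
  have habs : |(NW (G n) a b : ℝ) - D| ≤ (ε/2) * D := abs_le.2 ⟨by linarith, by linarith⟩
  have hεD : 0 < ε * D := mul_pos hε hD0
  linarith

end WithP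

end BipAux


end
end BipartiteAuxSection

/-- Under the assumptions of Conjecture q2, `s_p(K_{s,t},G_n) → 1` for all
`s,t ≥ 1`; moreover `K_{1,s}` is flat over the empty graph on `s` vertices. -/
theorem complete_bipartite_counts (p : ℕ → ℝ) (hp : ∀ n, p n ∈ Ioc (0:ℝ) 1)
    (hpslow : ∀ α : ℝ, 0 < α → ∀ᶠ n : ℕ in atTop, (n:ℝ) ^ (-α) ≤ p n)
    (G : ∀ n, SimpleGraph (Fin n))
    (hK2 : Tendsto (fun n => sDen (p n) (⊤ : SimpleGraph (Fin 2)) (G n)) atTop (nhds 1))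
    (hC4 : Tendsto (fun n => sDen (p n) (SimpleGraph.cycleGraph 4) (G n)) atTop (nhds 1))
    (hbdd : ∀ (m : ℕ) (F : SimpleGraph (Fin m)), ∃ M : ℝ, ∀ n, sDen (p n) F (G n) ≤ M) :
    (∀ s t : ℕ, 1 ≤ s → 1 ≤ t →
      Tendsto (fun n => sDen (p n) (completeBipartiteGraph (Fin s) (Fin t)) (G n))
        atTop (nhds 1)) ∧
    (∀ s : ℕ, 1 ≤ s → ∀ ε : ℝ, 0 < ε → ∀ᶠ n in atTop,
      ((Finset.univ.filter (fun v : Fin s → Fin n =>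
          ε * ((n:ℝ) * p n ^ s) <
            |((Finset.univ.filter (fun w : Fin n => ∀ i, (G n).Adj w (v i))).card : ℝ) -
              (n:ℝ) * p n ^ s|)).card : ℝ) ≤ ε * (n:ℝ) ^ s) := by
  classical
  have h11 := BipAux.ht11 hp hK2
  have h22 := BipAux.ht22 hp hpslow hbdd hC4
  have h12 := BipAux.ht12 hp h11 h22
  have hbound := BipAux.NW_bound hp hpslow hbdd
  have flat1 := BipAux.conc hp 1 h11 h12
  have h21 : Tendsto (BipAux.tRat p G 2 1) atTop (nhds 1) := by
    rw [BipAux.tRat_comm]; exact h12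
  have flat2 := BipAux.conc hp 2 h21 h22
  have flatS : ∀ s : ℕ, 1 ≤ s → ∀ ε : ℝ, 0 < ε → ∀ᶠ n : ℕ in atTop,
      ((Finset.univ.filter (fun v : Fin s → Fin n =>
          ε * ((n:ℝ) * p n ^ s) <
            |((BipAux.cnbF (G n) v).card : ℝ) - (n:ℝ) * p n ^ s|)).card : ℝ)
        ≤ ε * (n:ℝ) ^ s := by
    intro s hs
    obtain ⟨C1, hC10, hC1⟩ := hbound 1 (2*s)
    have hm1 : Tendsto (BipAux.tRat p G 1 s) atTop (nhds 1) :=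
      BipAux.moment hp 1 s flat1 C1 hC10 hC1
    obtain ⟨C2, hC20, hC2⟩ := hbound 2 (2*s)
    have hm2 : Tendsto (BipAux.tRat p G 2 s) atTop (nhds 1) :=
      BipAux.moment hp 2 s flat2 C2 hC20 hC2
    have hs1 : Tendsto (BipAux.tRat p G s 1) atTop (nhds 1) := by
      rw [BipAux.tRat_comm]; exact hm1
    have hs2 : Tendsto (BipAux.tRat p G s 2) atTop (nhds 1) := by
      rw [BipAux.tRat_comm]; exact hm2
    exact BipAux.conc hp s hs1 hs2
  constructor
  · intro s t hsu htu
    obtain ⟨s', rfl⟩ : ∃ s'', s = s'' + 1 := ⟨s - 1, by omega⟩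
    obtain ⟨t', rfl⟩ : ∃ t'', t = t'' + 1 := ⟨t - 1, by omega⟩
    obtain ⟨C, hC0, hC⟩ := hbound (s'+1) (2*(t'+1))
    have hmst : Tendsto (BipAux.tRat p G (s'+1) (t'+1)) atTop (nhds 1) :=
      BipAux.moment hp (s'+1) (t'+1) (flatS (s'+1) (by omega)) C hC0 hC
    obtain ⟨C1, hC10, hC1⟩ := hbound (t'+1) s'
    obtain ⟨C2, hC20, hC2⟩ := hbound (s'+1) t'
    set Er : ℕ → ℝ := fun n => ((BipAux.ePair (G n) (s'+1) (t'+1)).card : ℝ)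
      / (p n ^ ((s'+1)*(t'+1)) * (n:ℝ) ^ ((s'+1)+(t'+1))) with hEr
    have hEhi : ∀ᶠ n : ℕ in atTop, Er n ≤ BipAux.tRat p G (s'+1) (t'+1) n := by
      filter_upwards [eventually_ge_atTop 1] with n hn1
      have hp0 : (0:ℝ) < p n := (hp n).1
      have hn0 : (0:ℝ) < (n:ℝ) := by exact_mod_cast hn1
      rw [hEr]
      unfold BipAux.tRat
      rw [div_le_div_iff_of_pos_right (by positivity)]
      have h := Finset.card_le_card (BipAux.ePair_subset (G n) (s'+1) (t'+1))
      rw [BipAux.card_pairSet] at h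
      exact_mod_cast h
    set J : ℕ → ℝ := fun n =>
      ((s'+1)*(s'+1) : ℝ) * C1 * (p n ^ (t'+1) * (n:ℝ))⁻¹
        + ((t'+1)*(t'+1) : ℝ) * C2 * (p n ^ (s'+1) * (n:ℝ))⁻¹ with hJ
    have hJ0 : Tendsto J atTop (nhds 0) := by
      rw [hJ]
      have t1 : Tendsto (fun n : ℕ => ((s'+1)*(s'+1) : ℝ) * C1 * (p n ^ (t'+1) * (n:ℝ))⁻¹)
          atTop (nhds 0) := by
        have := (BipAux.ptend hp hpslow (t'+1)).inv_tendsto_atTop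
        simpa using this.const_mul (((s'+1)*(s'+1) : ℝ) * C1)
      have t2 : Tendsto (fun n : ℕ => ((t'+1)*(t'+1) : ℝ) * C2 * (p n ^ (s'+1) * (n:ℝ))⁻¹)
          atTop (nhds 0) := by
        have := (BipAux.ptend hp hpslow (s'+1)).inv_tendsto_atTop
        simpa using this.const_mul (((t'+1)*(t'+1) : ℝ) * C2)
      simpa using t1.add t2
    have hElo : ∀ᶠ n : ℕ in atTop,
        BipAux.tRat p G (s'+1) (t'+1) n - J n ≤ Er n := by
      filter_upwards [hC1, hC2, eventually_ge_atTop 1] with n h1 h2 hn1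
      have hp0 : (0:ℝ) < p n := (hp n).1
      have hn0 : (0:ℝ) < (n:ℝ) := by exact_mod_cast hn1
      have hpair := BipAux.pair_card_le (G n) (s'+1) (t'+1)
      rw [BipAux.card_pairSet] at hpair
      simp only [Nat.add_sub_cancel] at hpair
      have hkey : (BipAux.NW (G n) (s'+1) (t'+1) : ℝ)
          ≤ ((BipAux.ePair (G n) (s'+1) (t'+1)).card : ℝ)
            + ((s'+1)*(s'+1) : ℝ) * (BipAux.NW (G n) (t'+1) s' : ℝ)
            + ((t'+1)*(t'+1) : ℝ) * (BipAux.NW (G n) (s'+1) t' : ℝ) := by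
        exact_mod_cast hpair
      set JN : ℝ := ((s'+1)*(s'+1) : ℝ) * (C1 * (p n ^ ((t'+1)*s') * (n:ℝ) ^ ((t'+1)+s')))
          + ((t'+1)*(t'+1) : ℝ) * (C2 * (p n ^ ((s'+1)*t') * (n:ℝ) ^ ((s'+1)+t'))) with hJN
      have hkey2 : (BipAux.NW (G n) (s'+1) (t'+1) : ℝ)
          ≤ ((BipAux.ePair (G n) (s'+1) (t'+1)).card : ℝ) + JN := by
        have hcast1 : ((s'+1)*(s'+1) : ℝ) * (BipAux.NW (G n) (t'+1) s' : ℝ)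
            ≤ ((s'+1)*(s'+1) : ℝ) * (C1 * (p n ^ ((t'+1)*s') * (n:ℝ) ^ ((t'+1)+s'))) :=
          mul_le_mul_of_nonneg_left h1 (by positivity)
        have hcast2 : ((t'+1)*(t'+1) : ℝ) * (BipAux.NW (G n) (s'+1) t' : ℝ)
            ≤ ((t'+1)*(t'+1) : ℝ) * (C2 * (p n ^ ((s'+1)*t') * (n:ℝ) ^ ((s'+1)+t'))) :=
          mul_le_mul_of_nonneg_left h2 (by positivity)
        rw [hJN]
        linarith
      set D : ℝ := p n ^ ((s'+1)*(t'+1)) * (n:ℝ) ^ ((s'+1)+(t'+1)) with hD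
      have hD0 : (0:ℝ) < D := by rw [hD]; positivity
      have hJeq : JN / D = J n := by
        rw [div_eq_iff hD0.ne', hJN, hJ, hD]
        field_simp
        ring
      have hstep : BipAux.tRat p G (s'+1) (t'+1) n ≤ Er n + J n := by
        rw [hEr]
        unfold BipAux.tRat
        rw [← hD, ← hJeq, ← add_div, div_le_div_iff_of_pos_right hD0]
        exact hkey2
      linarith
    have hEt : Tendsto Er atTop (nhds 1) := by
      have hlow : Tendsto (fun n => BipAux.tRat p G (s'+1) (t'+1) n - J n) atTop (nhds 1) := by
        simpa using hmst.sub hJ0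
      exact tendsto_of_tendsto_of_tendsto_of_le_of_le' hlow hmst hElo hEhi
    exact BipAux.E_to_sDen hp (s'+1) (t'+1) hEt
  · intro s hs ε hε
    exact flatS s hs ε hε
end
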